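/- arXiv:1407.2481 — 8 statements merged into one kernel-verified Lean document; each statement's English description precedes it below -/
import Mathlib

section
/- Let f : ℝ² × S¹ → ℂ be smooth, supported in K × S¹ for some compact K ⊂ ℝ², and satisfy f(x,θ) = f(x,−θ) for all x,θ. If (Sf)(x,r) = 0 for all x ∈ ℝ² and r > 0, then for every ξ ∈ ℝ² \ {0} one has (ℱf)(ξ, ξ⁰) = 0 and (ℱf)(ξ, (ξ^⊥)⁰) = 0. Consequently, the transform Sf uniquely determines the values (ℱf)(ξ, ξ⁰) and (ℱf)(ξ, (ξ^⊥)⁰) for all ξ ≠ 0. -/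
open MeasureTheory Real

open Pointwise

noncomputable section

/-- The point of the unit circle `S¹ ⊂ ℝ²` at angle `t`. -/
def circ (t : ℝ) : ℝ × ℝ := (Real.cos t, Real.sin t)

/-- Normalization `v⁰ = v / |v|` of a vector (Euclidean norm). -/
def unitize (v : ℝ × ℝ) : ℝ × ℝ := (Real.sqrt (v.1 ^ 2 + v.2 ^ 2))⁻¹ • v

/-- For `ξ = (ξ₁, ξ₂)`, the rotated vector `ξ^⊥ = (ξ₂, −ξ₁)`. -/
def perp (ξ : ℝ × ℝ) : ℝ × ℝ := (ξ.2, -ξ.1)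

/-- Rigid rotation of the plane (and hence of `S¹`) by angle `θ`. -/
def rot (θ : ℝ) (v : ℝ × ℝ) : ℝ × ℝ :=
  (Real.cos θ * v.1 - Real.sin θ * v.2, Real.sin θ * v.1 + Real.cos θ * v.2)

/-- The anisotropic spherical Radon transform
`(S f)(x, r) = ∫_{S¹} f(x + rθ, θ) ds(θ)`. -/
def radonS (f : ℝ × ℝ → ℝ × ℝ → ℂ) (x : ℝ × ℝ) (r : ℝ) : ℂ :=
  ∫ t in (0 : ℝ)..(2 * π), f (x + r • circ t) (circ t)

/-- The Fourier transform in the first variable,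
`(ℱ f)(ξ, θ) = ∫_{ℝ²} e^{−i x·ξ} f(x, θ) dx`. -/
def fourier1 (f : ℝ × ℝ → ℝ × ℝ → ℂ) (ξ θ : ℝ × ℝ) : ℂ :=
  ∫ x : ℝ × ℝ, Complex.exp (-Complex.I * ((x.1 * ξ.1 + x.2 * ξ.2 : ℝ) : ℂ)) * f x θ

/-! ### Auxiliary lemmas -/

lemma circ_periodic : Function.Periodic circ (2*π) := by
  intro t; simp [circ, Real.cos_add_two_pi, Real.sin_add_two_pi]

lemma circ_continuous : Continuous circ := by
  unfold circ; fun_prop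

lemma circ_add_pi (t : ℝ) : circ (t + π) = -(circ t) := by
  simp [circ, Real.cos_add_pi, Real.sin_add_pi, Prod.ext_iff]

lemma circ_norm_le (t : ℝ) : ‖circ t‖ ≤ 1 := by
  rw [norm_prod_le_iff]
  constructor <;> rw [circ, Real.norm_eq_abs]
  · exact Real.abs_cos_le_one t
  · exact Real.abs_sin_le_one t

lemma aux_cos_congr {β : Type*} {h : ℝ → β} (hper : Function.Periodic h (2*π))
    (hev : ∀ u, h (-u) = h u) {a b : ℝ} (hc : Real.cos a = Real.cos b) : h b = h a := by
  rcases Real.cos_eq_cos_iff.mp hc with ⟨k, hk | hk⟩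
  · have hb : b = a + (k:ℝ) * (2*π) := by rw [hk]; ring
    rw [hb]; exact (hper.int_mul k) a
  · have hb : b = -a + (k:ℝ) * (2*π) := by rw [hk]; ring
    rw [hb, (hper.int_mul k) (-a)]; exact hev a

lemma aux_eq_zero_of_integral_zero {a b : ℝ} {k : ℝ → ℝ} (hk : Continuous k) (hnn : ∀ u, 0 ≤ k u)
    (h0 : ∫ u in a..b, k u = 0) {u₀ : ℝ} (hu₀ : u₀ ∈ Set.Ioo a b) : k u₀ = 0 := by
  by_contra hne
  have hpos : 0 < k u₀ := lt_of_le_of_ne (hnn u₀) (Ne.symm hne)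
  obtain ⟨ε, hε, hball⟩ := Metric.continuousAt_iff.mp hk.continuousAt (k u₀ / 2) (by linarith)
  set c := max (u₀ - ε/2) a with hc
  set d := min (u₀ + ε/2) b with hd
  have hcd : c < d := by
    rcases hu₀ with ⟨h1, h2⟩
    simp only [hc, hd, lt_min_iff, max_lt_iff]
    constructor <;> constructor <;> linarith
  have hlow : ∀ u ∈ Set.Icc c d, k u₀ / 2 ≤ k u := by
    intro u hu
    have h1 : u₀ - ε/2 ≤ c := le_max_left _ _
    have h2 : d ≤ u₀ + ε/2 := min_le_left _ _
    have : dist u u₀ < ε := by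
      rw [Real.dist_eq, abs_lt]
      constructor <;> [linarith [hu.1]; linarith [hu.2]]
    have := hball this
    rw [Real.dist_eq, abs_lt] at this
    linarith [this.1]
  have hint : ∀ s t : ℝ, IntervalIntegrable k volume s t := fun s t => hk.intervalIntegrable s t
  have h1 : (0:ℝ) ≤ ∫ u in a..c, k u :=
    intervalIntegral.integral_nonneg (le_max_right _ _) (fun u _ => hnn u)
  have h3 : (0:ℝ) ≤ ∫ u in d..b, k u :=
    intervalIntegral.integral_nonneg (min_le_right _ _) (fun u _ => hnn u)
  have h2 : (d - c) * (k u₀ / 2) ≤ ∫ u in c..d, k u := by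
    calc (d - c) * (k u₀ / 2) = ∫ _ in c..d, (k u₀ / 2) := by
          rw [intervalIntegral.integral_const, smul_eq_mul]
    _ ≤ ∫ u in c..d, k u :=
      intervalIntegral.integral_mono_on hcd.le intervalIntegrable_const (hint c d) hlow
  have hsplit : (∫ u in a..b, k u) =
      (∫ u in a..c, k u) + (∫ u in c..d, k u) + (∫ u in d..b, k u) := by
    rw [intervalIntegral.integral_add_adjacent_intervals (hint a c) (hint c d),
      intervalIntegral.integral_add_adjacent_intervals (hint a d) (hint d b)]
  have hmidpos : 0 < (d - c) * (k u₀ / 2) := mul_pos (by linarith) (by linarith)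
  rw [hsplit] at h0
  linarith

lemma aux_vanish_of_moments {k : ℝ → ℝ} (hk : Continuous k)
    (hev : ∀ u, k (-u) = k u) (hper : Function.Periodic k (2*π))
    (hmom : ∀ n : ℕ, ∫ u in (-π)..π, (Real.cos u)^n * k u = 0) :
    ∀ u₀ ∈ Set.Ioo (-π) π, k u₀ = 0 := by
  have hKcont : Continuous (fun s => k (Real.arccos s)) := hk.comp Real.continuous_arccos
  have hkK : ∀ u : ℝ, k u = k (Real.arccos (Real.cos u)) := by
    intro u
    exact (aux_cos_congr hper hev
      ((Real.cos_arccos (Real.neg_one_le_cos u) (Real.cos_le_one u)).symm)).symm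
  obtain ⟨Ck, hCk⟩ := isCompact_Icc.exists_bound_of_continuousOn (f := k)
    (s := Set.Icc (-π) π) hk.continuousOn
  have hCk' : ∀ u ∈ Set.Icc (-π) π, |k u| ≤ Ck := by
    intro u hu; rw [← Real.norm_eq_abs]; exact hCk u hu
  have hCk0 : 0 ≤ Ck := le_trans (abs_nonneg _)
    (hCk' 0 ⟨by linarith [Real.pi_pos], Real.pi_pos.le⟩)
  have hcontmul : ∀ p : Polynomial ℝ,
      Continuous (fun u => Polynomial.eval (Real.cos u) p * k u) := by
    intro p; exact ((p.continuous_aeval).comp Real.continuous_cos).mul hk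
  have hpoly : ∀ p : Polynomial ℝ, ∫ u in (-π)..π, Polynomial.eval (Real.cos u) p * k u = 0 := by
    intro p
    induction p using Polynomial.induction_on with
    | C a =>
      have := hmom 0
      simp only [pow_zero, one_mul] at this
      simp only [Polynomial.eval_C]
      rw [intervalIntegral.integral_const_mul, this, mul_zero]
    | add p q hp hq =>
      simp only [Polynomial.eval_add, add_mul]
      rw [intervalIntegral.integral_add ((hcontmul p).intervalIntegrable _ _)
        ((hcontmul q).intervalIntegrable _ _), hp, hq, add_zero]
    | monomial n a _ =>
      simp only [Polynomial.eval_mul, Polynomial.eval_C, Polynomial.eval_pow, Polynomial.eval_X,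
        mul_assoc]
      rw [intervalIntegral.integral_const_mul, hmom (n+1), mul_zero]
  have hsqnn : (0:ℝ) ≤ ∫ u in (-π)..π, k u * k u :=
    intervalIntegral.integral_nonneg (by linarith [Real.pi_pos]) (fun u _ => mul_self_nonneg _)
  have hsqle : ∀ ε : ℝ, 0 < ε → (∫ u in (-π)..π, k u * k u) ≤ ε * (Ck * (2*π)) := by
    intro ε hε
    obtain ⟨p, hp⟩ := exists_polynomial_near_of_continuousOn (-1) 1 (fun s => k (Real.arccos s))
      hKcont.continuousOn ε hε
    have heq : (∫ u in (-π)..π, (k u - Polynomial.eval (Real.cos u) p) * k u)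
        = ∫ u in (-π)..π, k u * k u := by
      simp only [sub_mul]
      rw [intervalIntegral.integral_sub (by exact (hk.mul hk).intervalIntegrable _ _)
        ((hcontmul p).intervalIntegrable _ _), hpoly p, sub_zero]
    have hbd : ∀ u ∈ Set.uIoc (-π) π,
        ‖(k u - Polynomial.eval (Real.cos u) p) * k u‖ ≤ ε * Ck := by
      intro u hu
      rw [Set.uIoc_of_le (by linarith [Real.pi_pos])] at hu
      have huIcc : u ∈ Set.Icc (-π) π := ⟨hu.1.le, hu.2⟩
      rw [norm_mul, Real.norm_eq_abs, Real.norm_eq_abs]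
      have h1 : |k u - Polynomial.eval (Real.cos u) p| ≤ ε := by
        rw [hkK u, abs_sub_comm]
        exact le_of_lt (hp (Real.cos u) ⟨Real.neg_one_le_cos u, Real.cos_le_one u⟩)
      exact mul_le_mul h1 (hCk' u huIcc) (abs_nonneg _) hε.le
    calc (∫ u in (-π)..π, k u * k u)
        ≤ ‖∫ u in (-π)..π, (k u - Polynomial.eval (Real.cos u) p) * k u‖ := by
          rw [heq]; exact le_abs_self _
      _ ≤ (ε * Ck) * |π - (-π)| := intervalIntegral.norm_integral_le_of_norm_le_const hbd
      _ = ε * (Ck * (2*π)) := by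
          rw [abs_of_pos (by linarith [Real.pi_pos])]; ring
  have hsq : (∫ u in (-π)..π, k u * k u) = 0 := by
    refine le_antisymm ?_ hsqnn
    by_contra hgt
    push_neg at hgt
    have hD : (0:ℝ) ≤ Ck * (2*π) := by positivity
    set I := ∫ u in (-π)..π, k u * k u
    have := hsqle (I / (2 * (Ck * (2*π)) + 2)) (by positivity)
    have h2 : I / (2 * (Ck * (2*π)) + 2) * (Ck * (2*π)) < I := by
      rw [div_mul_eq_mul_div, div_lt_iff₀ (by positivity)]
      nlinarith
    linarith
  intro u₀ hu₀
  have := aux_eq_zero_of_integral_zero (hk.mul hk) (fun u => mul_self_nonneg _) hsq hu₀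
  exact mul_self_eq_zero.mp this

/-- **Vanishing Fourier data from a vanishing anisotropic spherical Radon transform.**
For `f : ℝ² × S¹ → ℂ` smooth, supported in `K × S¹` with `K` compact, and even in the
second variable, if `(S f)(x, r) = 0` for all `x ∈ ℝ²` and all `r > 0`, then for every
`ξ ≠ 0` both `(ℱ f)(ξ, ξ⁰) = 0` and `(ℱ f)(ξ, (ξ^⊥)⁰) = 0`; consequently the transform
`S f` uniquely determines these Fourier values. -/
theorem radon_determines_fourier_values
    (f : ℝ × ℝ → ℝ × ℝ → ℂ)
    (hf : ContDiff ℝ (⊤ : ℕ∞) (fun p : (ℝ × ℝ) × ℝ => f p.1 (circ p.2)))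
    (K : Set (ℝ × ℝ)) (hK : IsCompact K)
    (hsupp : ∀ x ∉ K, ∀ t : ℝ, f x (circ t) = 0)
    (heven : ∀ x : ℝ × ℝ, ∀ t : ℝ, f x (-(circ t)) = f x (circ t))
    (hS : ∀ x : ℝ × ℝ, ∀ r : ℝ, 0 < r → radonS f x r = 0) :
    ∀ ξ : ℝ × ℝ, ξ ≠ 0 →
      fourier1 f ξ (unitize ξ) = 0 ∧ fourier1 f ξ (unitize (perp ξ)) = 0 := by
  intro ξ hξ
  have hfc : Continuous (fun p : (ℝ × ℝ) × ℝ => f p.1 (circ p.2)) := hf.continuous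
  -- uniform bound on `f`
  obtain ⟨C₀, hC₀⟩ := (hK.prod isCompact_Icc).exists_bound_of_continuousOn
    (f := fun p : (ℝ × ℝ) × ℝ => f p.1 (circ p.2)) (s := K ×ˢ Set.Icc 0 (2*π)) hfc.continuousOn
  set C := max C₀ 0 with hCdef
  have hC : ∀ (x : ℝ × ℝ) (t : ℝ), ‖f x (circ t)‖ ≤ C := by
    intro x t
    by_cases hx : x ∈ K
    · obtain ⟨t', ht', hct⟩ := circ_periodic.exists_mem_Ico₀ Real.two_pi_pos t
      rw [hct]
      exact le_trans (hC₀ (x, t') ⟨hx, ⟨ht'.1, ht'.2.le⟩⟩) (le_max_left _ _)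
    · rw [hsupp x hx t, norm_zero]; exact le_max_right _ _
  have hC0 : 0 ≤ C := le_max_right _ _
  -- kernel facts
  have hinner : Continuous fun x : ℝ × ℝ => ((x.1 * ξ.1 + x.2 * ξ.2 : ℝ) : ℂ) :=
    Complex.continuous_ofReal.comp (by fun_prop)
  have hecont : Continuous fun x : ℝ × ℝ =>
      Complex.exp (-Complex.I * ((x.1 * ξ.1 + x.2 * ξ.2 : ℝ) : ℂ)) :=
    Complex.continuous_exp.comp (continuous_const.mul hinner)
  have hek : ∀ d : ℝ, ‖Complex.exp (-Complex.I * (d:ℂ))‖ = 1 := by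
    intro d
    rw [Complex.norm_exp]
    simp
  -- polar coordinates for ξ
  set ρ := Real.sqrt (ξ.1^2 + ξ.2^2) with hρdef
  have hρsq : 0 < ξ.1^2 + ξ.2^2 := by
    have : ξ.1 ≠ 0 ∨ ξ.2 ≠ 0 := by
      by_contra hcon; push_neg at hcon
      exact hξ (Prod.ext hcon.1 hcon.2)
    rcases this with h | h <;> positivity
  have hρ : 0 < ρ := Real.sqrt_pos.mpr hρsq
  obtain ⟨φ, hcosφ, hsinφ⟩ : ∃ φ : ℝ, Real.cos φ = ξ.1 / ρ ∧ Real.sin φ = ξ.2 / ρ := by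
    set z : ℂ := ⟨ξ.1, ξ.2⟩ with hz
    have hzne : z ≠ 0 := by
      intro hcon
      apply hξ
      have h1 : z.re = 0 := by rw [hcon]; rfl
      have h2 : z.im = 0 := by rw [hcon]; rfl
      exact Prod.ext h1 h2
    have habs : ‖z‖ = ρ := by
      rw [Complex.norm_def, hρdef]
      congr 1
      simp [Complex.normSq_mk, hz]
      ring
    exact ⟨Complex.arg z, by rw [Complex.cos_arg hzne, habs],
      by rw [Complex.sin_arg, habs]⟩
  have hξ1 : ξ.1 = ρ * Real.cos φ := by rw [hcosφ]; field_simp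
  have hξ2 : ξ.2 = ρ * Real.sin φ := by rw [hsinφ]; field_simp
  -- the partial Fourier transform along the circle
  set g : ℝ → ℂ := fun t => fourier1 f ξ (circ t) with hgdef
  have hgcont : Continuous g := by
    rw [hgdef]
    show Continuous fun t : ℝ => ∫ x : ℝ × ℝ,
      Complex.exp (-Complex.I * ((x.1 * ξ.1 + x.2 * ξ.2 : ℝ) : ℂ)) * f x (circ t)
    apply MeasureTheory.continuous_of_dominated (bound := K.indicator (fun _ => C))
    · intro t
      exact (hecont.mul (hfc.comp (continuous_id.prodMk continuous_const))).aestronglyMeasurable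
    · intro t
      apply Filter.Eventually.of_forall
      intro x
      by_cases hx : x ∈ K
      · rw [Set.indicator_of_mem hx, norm_mul, hek, one_mul]
        exact hC x t
      · rw [Set.indicator_of_notMem hx, hsupp x hx t, mul_zero, norm_zero]
    · rw [MeasureTheory.integrable_indicator_iff hK.isClosed.measurableSet]
      exact integrableOn_const hK.measure_lt_top.ne
    · apply Filter.Eventually.of_forall
      intro x
      exact continuous_const.mul (hfc.comp (continuous_const.prodMk continuous_id))
  have hgper : Function.Periodic g (2*π) := by
    intro t
    simp only [hgdef]
    rw [circ_periodic t]
  have hgpi : ∀ s : ℝ, g (s + π) = g s := by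
    intro s
    simp only [hgdef, fourier1]
    rw [circ_add_pi s]
    congr 1
    funext x
    rw [heven x s]
  -- translation property of the Fourier integral
  have htrans : ∀ (a : ℝ × ℝ) (t : ℝ),
      (∫ x : ℝ × ℝ, Complex.exp (-Complex.I * ((x.1*ξ.1 + x.2*ξ.2 : ℝ):ℂ)) * f (x + a) (circ t))
        = Complex.exp (Complex.I * ((a.1*ξ.1 + a.2*ξ.2 : ℝ):ℂ)) * g t := by
    intro a t
    have key : ∀ x : ℝ × ℝ,
        Complex.exp (-Complex.I * ((x.1*ξ.1 + x.2*ξ.2 : ℝ):ℂ)) * f (x + a) (circ t)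
        = Complex.exp (Complex.I * ((a.1*ξ.1 + a.2*ξ.2 : ℝ):ℂ)) *
          ((fun y : ℝ × ℝ => Complex.exp (-Complex.I * ((y.1*ξ.1 + y.2*ξ.2 : ℝ):ℂ)) * f y (circ t))
            (x + a)) := by
      intro x
      simp only [Prod.fst_add, Prod.snd_add]
      rw [← mul_assoc, ← Complex.exp_add]
      congr 2
      push_cast
      ring
    simp_rw [key]
    rw [MeasureTheory.integral_const_mul,
      MeasureTheory.integral_add_right_eq_self
        (fun y : ℝ × ℝ => Complex.exp (-Complex.I * ((y.1*ξ.1 + y.2*ξ.2 : ℝ):ℂ)) * f y (circ t)) a]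
    rfl
  -- the Fourier transform of the Radon data vanishes
  have hkey : ∀ r : ℝ, 0 < r →
      (∫ t in (0:ℝ)..(2*π),
        Complex.exp (Complex.I * (((r * Real.cos t) * ξ.1 + (r * Real.sin t) * ξ.2 : ℝ):ℂ))
          * g t) = 0 := by
    intro r hr
    set ν := volume.restrict (Set.Ioc (0:ℝ) (2*π)) with hν
    set Φ : (ℝ × ℝ) → ℝ → ℂ := fun x t =>
      Complex.exp (-Complex.I * ((x.1*ξ.1 + x.2*ξ.2 : ℝ):ℂ)) * f (x + r • circ t) (circ t)
      with hΦ
    have hΦc : Continuous (Function.uncurry Φ) := by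
      apply Continuous.mul
      · exact hecont.comp continuous_fst
      · exact hfc.comp ((continuous_fst.add
          ((circ_continuous.comp continuous_snd).const_smul r)).prodMk continuous_snd)
    set L := K + Metric.closedBall (0 : ℝ × ℝ) |r| with hLdef
    have hLc : IsCompact L := hK.add (isCompact_closedBall _ _)
    have hmem : ∀ (x : ℝ × ℝ) (t : ℝ), x + r • circ t ∈ K → x ∈ L := by
      intro x t hxK
      rw [hLdef]
      refine ⟨x + r • circ t, hxK, -(r • circ t), ?_, add_neg_cancel_right _ _⟩
      rw [Metric.mem_closedBall, dist_zero_right, norm_neg, norm_smul, Real.norm_eq_abs]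
      calc |r| * ‖circ t‖ ≤ |r| * 1 := by
            exact mul_le_mul_of_nonneg_left (circ_norm_le t) (abs_nonneg r)
        _ = |r| := mul_one _
    have hzero : ∀ x : ℝ × ℝ, x ∉ L → ∀ t : ℝ, Φ x t = 0 := by
      intro x hx t
      rw [hΦ]
      simp only
      rw [hsupp _ (fun hmem' => hx (hmem x t hmem')) t, mul_zero]
    have hbd : ∀ q : (ℝ × ℝ) × ℝ, ‖Function.uncurry Φ q‖ ≤ L.indicator (fun _ => C) q.1 := by
      rintro ⟨x, t⟩
      by_cases hx : x ∈ L
      · rw [Set.indicator_of_mem hx]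
        show ‖Φ x t‖ ≤ C
        rw [hΦ]
        simp only
        rw [norm_mul, hek, one_mul]
        exact hC _ t
      · rw [Set.indicator_of_notMem hx]
        show ‖Φ x t‖ ≤ 0
        rw [hzero x hx t, norm_zero]
    have hbint : Integrable (fun q : (ℝ × ℝ) × ℝ => L.indicator (fun _ => C) q.1)
        (volume.prod ν) := by
      have h1 : Integrable (L.indicator (fun _ => C)) (volume : Measure (ℝ × ℝ)) := by
        rw [MeasureTheory.integrable_indicator_iff hLc.isClosed.measurableSet]
        exact integrableOn_const hLc.measure_lt_top.ne
      have h2 : Integrable (fun _ : ℝ => (1:ℝ)) ν := by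
        rw [hν]
        exact integrableOn_const measure_Ioc_lt_top.ne
      have := h1.mul_prod h2
      simpa using this
    have hΦint : Integrable (Function.uncurry Φ) (volume.prod ν) :=
      Integrable.mono' hbint hΦc.aestronglyMeasurable (Filter.Eventually.of_forall hbd)
    have hswap := MeasureTheory.integral_integral_swap (f := Φ) hΦint
    have h0 : (∫ x : ℝ × ℝ,
        Complex.exp (-Complex.I * ((x.1*ξ.1+x.2*ξ.2:ℝ):ℂ)) * radonS f x r) = 0 := by
      have hz : ∀ x : ℝ × ℝ,
          Complex.exp (-Complex.I * ((x.1*ξ.1+x.2*ξ.2:ℝ):ℂ)) * radonS f x r = 0 := by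
        intro x; rw [hS x r hr, mul_zero]
      simp only [hz, integral_zero]
    have h1 : ∀ x : ℝ × ℝ,
        Complex.exp (-Complex.I * ((x.1*ξ.1+x.2*ξ.2:ℝ):ℂ)) * radonS f x r
          = ∫ t : ℝ, Φ x t ∂ν := by
      intro x
      rw [radonS, intervalIntegral.integral_of_le (by positivity : (0:ℝ) ≤ 2*π),
        ← MeasureTheory.integral_const_mul]
    have h3 : ∀ t : ℝ, (∫ x : ℝ × ℝ, Φ x t)
        = Complex.exp (Complex.I * (((r * Real.cos t) * ξ.1 + (r * Real.sin t) * ξ.2 : ℝ):ℂ))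
          * g t := by
      intro t
      have heq : ((r • circ t).1*ξ.1 + (r • circ t).2*ξ.2 : ℝ)
          = (r * Real.cos t) * ξ.1 + (r * Real.sin t) * ξ.2 := by
        simp [circ, Prod.smul_fst, Prod.smul_snd, smul_eq_mul]
      rw [← heq]
      exact htrans (r • circ t) t
    rw [intervalIntegral.integral_of_le (by positivity : (0:ℝ) ≤ 2*π)]
    calc (∫ t in Set.Ioc (0:ℝ) (2*π),
          Complex.exp (Complex.I * (((r * Real.cos t) * ξ.1 + (r * Real.sin t) * ξ.2 : ℝ):ℂ))
            * g t)
        = ∫ t : ℝ, (∫ x : ℝ × ℝ, Φ x t) ∂ν := by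
          apply integral_congr_ae
          exact Filter.Eventually.of_forall (fun t => (h3 t).symm)
      _ = ∫ x : ℝ × ℝ, (∫ t : ℝ, Φ x t ∂ν) := hswap.symm
      _ = ∫ x : ℝ × ℝ,
          Complex.exp (-Complex.I * ((x.1*ξ.1+x.2*ξ.2:ℝ):ℂ)) * radonS f x r := by
          simp only [h1]
      _ = 0 := h0
  -- shifted function and its properties
  set G : ℝ → ℂ := fun u => g (u + φ) with hGdef
  have hGcont : Continuous G := hgcont.comp (continuous_id.add continuous_const)
  have hGper : Function.Periodic G (2*π) := by
    intro u
    simp only [hGdef]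
    rw [show u + 2*π + φ = (u + φ) + 2*π by ring]
    exact hgper (u + φ)
  have hGpi : ∀ u : ℝ, G (u + π) = G u := by
    intro u
    simp only [hGdef]
    rw [show u + π + φ = (u + φ) + π by ring]
    exact hgpi (u + φ)
  set c : ℝ → ℂ := fun u => Complex.I * ((ρ * Real.cos u : ℝ) : ℂ) with hcdef
  have hccont : Continuous c := by
    rw [hcdef]
    exact continuous_const.mul (Complex.continuous_ofReal.comp (continuous_const.mul Real.continuous_cos))
  have hnormc : ∀ u : ℝ, ‖c u‖ ≤ ρ := by
    intro u
    rw [hcdef]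
    simp only [norm_mul, Complex.norm_I, one_mul, Complex.norm_real, Real.norm_eq_abs, abs_mul,
      abs_of_pos hρ]
    calc ρ * |Real.cos u| ≤ ρ * 1 :=
          mul_le_mul_of_nonneg_left (Real.abs_cos_le_one u) hρ.le
      _ = ρ := mul_one _
  have hexp1 : ∀ (u : ℝ) (x : ℝ), ‖Complex.exp (c u * (x:ℂ))‖ = 1 := by
    intro u x
    rw [hcdef]
    simp only
    rw [show Complex.I * ((ρ * Real.cos u : ℝ):ℂ) * (x:ℂ)
        = Complex.I * ((ρ * Real.cos u * x : ℝ):ℂ) by push_cast; ring]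
    rw [Complex.norm_exp]
    simp
  -- the vanishing of F(r) for r > 0
  have hF0 : ∀ r : ℝ, 0 < r → (∫ u in (-π)..π, Complex.exp (c u * (r:ℂ)) * G u) = 0 := by
    intro r hr
    have h := hkey r hr
    have hpt : ∀ t : ℝ,
        Complex.exp (Complex.I * (((r * Real.cos t) * ξ.1 + (r * Real.sin t) * ξ.2 : ℝ):ℂ)) * g t
        = (fun u => Complex.exp (c u * (r:ℂ)) * G u) (t - φ) := by
      intro t
      simp only [hGdef, hcdef]
      rw [sub_add_cancel]
      congr 2
      rw [hξ1, hξ2, Real.cos_sub]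
      push_cast
      ring
    rw [show (∫ t in (0:ℝ)..(2*π),
        Complex.exp (Complex.I * (((r * Real.cos t) * ξ.1 + (r * Real.sin t) * ξ.2 : ℝ):ℂ)) * g t)
        = ∫ t in (0:ℝ)..(2*π), (fun u => Complex.exp (c u * (r:ℂ)) * G u) (t - φ) by
          apply intervalIntegral.integral_congr; intro t _; exact hpt t] at h
    rw [intervalIntegral.integral_comp_sub_right (fun u => Complex.exp (c u * (r:ℂ)) * G u) φ] at h
    have hΨper : Function.Periodic (fun u => Complex.exp (c u * (r:ℂ)) * G u) (2*π) := by
      intro u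
      simp only [hcdef]
      rw [Real.cos_add_two_pi, hGper u]
    have := hΨper.intervalIntegral_add_eq (0 - φ) (-π)
    rw [show 0 - φ + 2*π = 2*π - φ by ring, show -π + 2*π = π by ring] at this
    rw [this] at h
    exact h
  -- bound for G
  obtain ⟨Cg, hCg⟩ := isCompact_Icc.exists_bound_of_continuousOn (f := G)
    (s := Set.Icc (-π) π) hGcont.continuousOn
  -- the moment functions
  set M : ℕ → ℝ → ℂ := fun n x =>
    ∫ u in (-π)..π, (c u)^n * Complex.exp (c u * (x:ℂ)) * G u with hMdef
  have hcontM : ∀ (n : ℕ) (x : ℝ),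
      Continuous fun u => (c u)^n * Complex.exp (c u * (x:ℂ)) * G u := by
    intro n x
    exact ((hccont.pow n).mul
      (Complex.continuous_exp.comp (hccont.mul continuous_const))).mul hGcont
  have hMd : ∀ (n : ℕ) (x₀ : ℝ), HasDerivAt (M n) (M (n+1) x₀) x₀ := by
    intro n x₀
    have key := intervalIntegral.hasDerivAt_integral_of_dominated_loc_of_deriv_le
      (F := fun (x : ℝ) (u : ℝ) => (c u)^n * Complex.exp (c u * (x:ℂ)) * G u)
      (F' := fun (x : ℝ) (u : ℝ) => (c u)^(n+1) * Complex.exp (c u * (x:ℂ)) * G u)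
      (a := -π) (b := π) (μ := volume) (x₀ := x₀)
      (bound := fun _ => ρ^(n+1) * Cg) (s := Metric.ball x₀ 1) (Metric.ball_mem_nhds x₀ one_pos)
      (Filter.Eventually.of_forall fun x => (hcontM n x).aestronglyMeasurable)
      ((hcontM n x₀).intervalIntegrable _ _)
      (hcontM (n+1) x₀).aestronglyMeasurable
      ?_ ?_ ?_
    · exact key.2
    · -- bound
      apply Filter.Eventually.of_forall
      intro u hu x _
      have huIcc : u ∈ Set.Icc (-π) π := by
        rw [Set.uIoc_of_le (by linarith [Real.pi_pos])] at hu
        exact ⟨hu.1.le, hu.2⟩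
      rw [norm_mul, norm_mul, norm_pow, hexp1 u x, mul_one]
      have h1 : ‖c u‖^(n+1) ≤ ρ^(n+1) := pow_le_pow_left₀ (norm_nonneg _) (hnormc u) _
      exact mul_le_mul h1 (hCg u huIcc) (norm_nonneg _) (by positivity)
    · exact intervalIntegrable_const
    · -- differentiability
      apply Filter.Eventually.of_forall
      intro u hu x hx
      have h1 : HasDerivAt (fun x : ℝ => (x : ℂ)) 1 x := by
        simpa using (hasDerivAt_id x).ofReal_comp
      have h2 : HasDerivAt (fun x : ℝ => c u * (x:ℂ)) (c u * 1) x := h1.const_mul (c u)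
      have h3 : HasDerivAt (fun x : ℝ => Complex.exp (c u * (x:ℂ)))
        (Complex.exp (c u * (x:ℂ)) * (c u * 1)) x := h2.cexp
      have h4 := (h3.const_mul ((c u)^n)).mul_const (G u)
      refine h4.congr_deriv ?_
      ring
  have hMzero : ∀ (n : ℕ) (x : ℝ), 0 < x → M n x = 0 := by
    intro n
    induction n with
    | zero =>
      intro x hx
      have := hF0 x hx
      simp only [hMdef, pow_zero, one_mul]
      exact this
    | succ n ih =>
      intro x hx
      have hev : M n =ᶠ[nhds x] (fun _ => (0:ℂ)) := by
        filter_upwards [Ioi_mem_nhds hx] with y hy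
        exact ih y hy
      have hd1 : HasDerivAt (fun _ : ℝ => (0:ℂ)) (M (n+1) x) x :=
        (Filter.EventuallyEq.hasDerivAt_iff hev).mp (hMd n x)
      exact hd1.unique (hasDerivAt_const x 0)
  have hM0 : ∀ n : ℕ, M n 0 = 0 := by
    intro n
    have t1 : Filter.Tendsto (M n) (nhdsWithin 0 (Set.Ioi 0)) (nhds (M n 0)) :=
      ((hMd n 0).continuousAt.tendsto).mono_left nhdsWithin_le_nhds
    have t2 : Filter.Tendsto (M n) (nhdsWithin 0 (Set.Ioi 0)) (nhds 0) := by
      apply Filter.Tendsto.congr' _ tendsto_const_nhds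
      filter_upwards [self_mem_nhdsWithin] with y hy
      exact (hMzero n y hy).symm
    exact tendsto_nhds_unique t1 t2
  -- moments of G against powers of cosine vanish
  have hmomG : ∀ n : ℕ, (∫ u in (-π)..π, ((Real.cos u : ℝ):ℂ)^n * G u) = 0 := by
    intro n
    have h := hM0 n
    simp only [hMdef, Complex.ofReal_zero, mul_zero, Complex.exp_zero, mul_one] at h
    have hsplit : ∀ u : ℝ, (c u)^n * G u
        = (Complex.I * (ρ:ℂ))^n * (((Real.cos u : ℝ):ℂ)^n * G u) := by
      intro u
      simp only [hcdef]
      push_cast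
      ring
    rw [show (∫ u in (-π)..π, (c u)^n * G u)
        = ∫ u in (-π)..π, (Complex.I * (ρ:ℂ))^n * (((Real.cos u : ℝ):ℂ)^n * G u) by
          apply intervalIntegral.integral_congr; intro u _; exact hsplit u,
      intervalIntegral.integral_const_mul] at h
    rcases mul_eq_zero.mp h with h' | h'
    · exact absurd h' (pow_ne_zero _ (mul_ne_zero Complex.I_ne_zero
        (Complex.ofReal_ne_zero.mpr hρ.ne')))
    · exact h'
  -- symmetrize
  set h : ℝ → ℂ := fun u => G u + G (-u) with hhdef
  have hhcont : Continuous h := hGcont.add (hGcont.comp continuous_neg)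
  have hhev : ∀ u : ℝ, h (-u) = h u := by
    intro u
    simp only [hhdef, neg_neg]
    exact add_comm _ _
  have hhper : Function.Periodic h (2*π) := by
    intro u
    simp only [hhdef]
    rw [hGper u, show -(u + 2*π) = -u - 2*π by ring, hGper.sub_eq (-u)]
  have hmomh : ∀ n : ℕ, (∫ u in (-π)..π, ((Real.cos u : ℝ):ℂ)^n * h u) = 0 := by
    intro n
    have hrefl : (∫ u in (-π)..π, ((Real.cos u : ℝ):ℂ)^n * G (-u))
        = ∫ u in (-π)..π, ((Real.cos u : ℝ):ℂ)^n * G u := by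
      have := intervalIntegral.integral_comp_neg (a := -π) (b := π)
        (fun u => ((Real.cos u : ℝ):ℂ)^n * G u)
      simp only [Real.cos_neg, neg_neg] at this
      exact this
    have hint1 : IntervalIntegrable (fun u => ((Real.cos u : ℝ):ℂ)^n * G u) volume (-π) π := by
      apply Continuous.intervalIntegrable
      exact ((Complex.continuous_ofReal.comp Real.continuous_cos).pow n).mul hGcont
    have hint2 : IntervalIntegrable (fun u => ((Real.cos u : ℝ):ℂ)^n * G (-u)) volume (-π) π := by
      apply Continuous.intervalIntegrable
      exact ((Complex.continuous_ofReal.comp Real.continuous_cos).pow n).mul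
        (hGcont.comp continuous_neg)
    simp only [hhdef, mul_add]
    rw [intervalIntegral.integral_add hint1 hint2, hmomG n, hrefl, hmomG n, add_zero]
  -- real and imaginary parts
  have hre : ∀ u₀ ∈ Set.Ioo (-π) π, h u₀ = 0 := by
    have hmomre : ∀ n : ℕ, ∫ u in (-π)..π, (Real.cos u)^n * (h u).re = 0 := by
      intro n
      have hint : IntervalIntegrable (fun u => ((Real.cos u : ℝ):ℂ)^n * h u) volume (-π) π := by
        apply Continuous.intervalIntegrable
        exact ((Complex.continuous_ofReal.comp Real.continuous_cos).pow n).mul hhcont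
      have := Complex.reCLM.intervalIntegral_comp_comm hint
      rw [hmomh n] at this
      simp only [map_zero] at this
      rw [← this]
      apply intervalIntegral.integral_congr
      intro u _
      simp only [Complex.reCLM_apply, ← Complex.ofReal_pow, Complex.re_ofReal_mul]
    have hmomim : ∀ n : ℕ, ∫ u in (-π)..π, (Real.cos u)^n * (h u).im = 0 := by
      intro n
      have hint : IntervalIntegrable (fun u => ((Real.cos u : ℝ):ℂ)^n * h u) volume (-π) π := by
        apply Continuous.intervalIntegrable
        exact ((Complex.continuous_ofReal.comp Real.continuous_cos).pow n).mul hhcont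
      have := Complex.imCLM.intervalIntegral_comp_comm hint
      rw [hmomh n] at this
      simp only [map_zero] at this
      rw [← this]
      apply intervalIntegral.integral_congr
      intro u _
      simp only [Complex.imCLM_apply, ← Complex.ofReal_pow, Complex.im_ofReal_mul]
    intro u₀ hu₀
    have h1 := aux_vanish_of_moments (k := fun u => (h u).re)
      (Complex.continuous_re.comp hhcont)
      (fun u => by show (h (-u)).re = (h u).re; rw [hhev u])
      (fun u => by show (h (u + 2*π)).re = (h u).re; rw [hhper u]) hmomre u₀ hu₀
    have h2 := aux_vanish_of_moments (k := fun u => (h u).im)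
      (Complex.continuous_im.comp hhcont)
      (fun u => by show (h (-u)).im = (h u).im; rw [hhev u])
      (fun u => by show (h (u + 2*π)).im = (h u).im; rw [hhper u]) hmomim u₀ hu₀
    exact Complex.ext h1 h2
  -- conclude
  have hG0 : G 0 = 0 := by
    have := hre 0 ⟨by linarith [Real.pi_pos], Real.pi_pos⟩
    simp only [hhdef, neg_zero] at this
    have h2 : (2:ℂ) * G 0 = 0 := by rw [two_mul]; exact this
    exact (mul_eq_zero.mp h2).resolve_left two_ne_zero
  have hGpi2 : G (-(π/2)) = 0 := by
    have := hre (-(π/2)) ⟨by linarith [Real.pi_pos], by linarith [Real.pi_pos]⟩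
    simp only [hhdef, neg_neg] at this
    have heq : G (π/2) = G (-(π/2)) := by
      conv_lhs => rw [show (π/2 : ℝ) = -(π/2) + π by ring]
      exact hGpi (-(π/2))
    rw [heq] at this
    have h2 : (2:ℂ) * G (-(π/2)) = 0 := by rw [two_mul]; exact this
    exact (mul_eq_zero.mp h2).resolve_left two_ne_zero
  constructor
  · have hcircφ : circ φ = unitize ξ := by
      rw [circ, unitize, ← hρdef, Prod.ext_iff]
      constructor
      · simp [hcosφ, div_eq_inv_mul]
      · simp [hsinφ, div_eq_inv_mul]
    have : G 0 = fourier1 f ξ (unitize ξ) := by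
      simp only [hGdef, hgdef, zero_add]
      rw [hcircφ]
    rw [← this]
    exact hG0
  · have hρperp : Real.sqrt ((perp ξ).1^2 + (perp ξ).2^2) = ρ := by
      rw [perp, hρdef]
      congr 1
      ring
    have hc1 : Real.cos (φ - π/2) = ρ⁻¹ * ξ.2 := by
      rw [Real.cos_sub, Real.cos_pi_div_two, Real.sin_pi_div_two, hsinφ]
      rw [mul_zero, zero_add, mul_one, div_eq_inv_mul]
    have hc2 : Real.sin (φ - π/2) = -(ρ⁻¹ * ξ.1) := by
      rw [Real.sin_sub, Real.cos_pi_div_two, Real.sin_pi_div_two, hcosφ]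
      rw [mul_zero, zero_sub, mul_one, div_eq_inv_mul]
    have hcircperp : circ (-(π/2) + φ) = unitize (perp ξ) := by
      rw [show (-(π/2) + φ : ℝ) = φ - π/2 by ring, circ, unitize, hρperp, Prod.ext_iff]
      constructor
      · simpa [perp] using hc1
      · simpa [perp] using hc2
    have : G (-(π/2)) = fourier1 f ξ (unitize (perp ξ)) := by
      simp only [hGdef, hgdef]
      rw [hcircperp]
    rw [← this]
    exact hGpi2

end
end

section
/- Let A, A' : ℝ² → ℝ^{2×2} be smooth compactly supported fields of symmetric matrices, and define f_A(x,θ) = ⟨θ, A(x)θ⟩ and f_{A'}(x,θ) = ⟨θ, A'(x)θ⟩ for x ∈ ℝ², θ ∈ S¹. If (S f_A)(x,r) = (S f_{A'})(x,r) for all x ∈ ℝ² and r > 0, then tr A(x) = tr A'(x) for every x ∈ ℝ². -/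
open MeasureTheory Real Matrix

noncomputable section

/-- The quadratic-form symbol `f_A(x, θ) = ⟨θ, A(x) θ⟩` associated with a matrix field. -/
def quadF (A : ℝ × ℝ → Matrix (Fin 2) (Fin 2) ℝ) (x : ℝ × ℝ) (v : ℝ × ℝ) : ℂ :=
  ((![v.1, v.2] ⬝ᵥ (A x).mulVec ![v.1, v.2] : ℝ) : ℂ)

lemma quadF_eq (A : ℝ × ℝ → Matrix (Fin 2) (Fin 2) ℝ) (x : ℝ × ℝ) (v : ℝ × ℝ) :
    quadF A x v = ((v.1 * (A x 0 0 * v.1 + A x 0 1 * v.2)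
      + v.2 * (A x 1 0 * v.1 + A x 1 1 * v.2) : ℝ) : ℂ) := by
  simp [quadF, dotProduct, Matrix.mulVec, Fin.sum_univ_two]

lemma radon_cont (A : ℝ × ℝ → Matrix (Fin 2) (Fin 2) ℝ)
    (hA : ∀ i j, ContDiff ℝ (⊤ : ℕ∞) (fun x => A x i j)) (x : ℝ × ℝ) :
    Continuous (fun r => radonS (quadF A) x r) := by
  unfold radonS
  apply intervalIntegral.continuous_parametric_intervalIntegral_of_continuous'
  have hc : ∀ i j, Continuous fun p : ℝ × ℝ => A p i j := fun i j => (hA i j).continuous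
  have hxc : Continuous (fun p : ℝ × ℝ => (x + p.1 • circ p.2)) := by
    unfold circ; fun_prop
  simp only [Function.uncurry, quadF_eq]
  apply Complex.continuous_ofReal.comp
  unfold circ
  fun_prop

lemma radon_zero (A : ℝ × ℝ → Matrix (Fin 2) (Fin 2) ℝ) (x : ℝ × ℝ) :
    radonS (quadF A) x 0 = ((π * (A x).trace : ℝ) : ℂ) := by
  unfold radonS
  simp only [zero_smul, add_zero, quadF_eq, circ]
  rw [intervalIntegral.integral_ofReal]
  norm_cast
  have : ∀ t : ℝ, cos t * (A x 0 0 * cos t + A x 0 1 * sin t)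
      + sin t * (A x 1 0 * cos t + A x 1 1 * sin t)
      = A x 0 0 * cos t ^ 2 + (A x 0 1 + A x 1 0) * (sin t * cos t)
        + A x 1 1 * sin t ^ 2 := by intro t; ring
  simp only [this]
  rw [intervalIntegral.integral_add, intervalIntegral.integral_add,
    intervalIntegral.integral_const_mul, intervalIntegral.integral_const_mul,
    intervalIntegral.integral_const_mul, integral_cos_sq, integral_sin_sq,
    integral_sin_mul_cos₁, Matrix.trace_fin_two]
  · simp [Real.sin_two_pi, Real.cos_two_pi]; ring
  · exact (continuous_const.mul ((continuous_cos.pow 2))).intervalIntegrable _ _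
  · exact (continuous_const.mul (continuous_sin.mul continuous_cos)).intervalIntegrable _ _
  · exact ((continuous_const.mul (continuous_cos.pow 2)).add
      (continuous_const.mul (continuous_sin.mul continuous_cos))).intervalIntegrable _ _
  · exact (continuous_const.mul (continuous_sin.pow 2)).intervalIntegrable _ _

/-- **The trace of a symmetric matrix field is determined by the anisotropic spherical
Radon transform of its quadratic form.** If `A, A'` are smooth compactly supported
symmetric matrix fields whose quadratic forms have the same anisotropic spherical Radon
transform for all centers and all positive radii, then `tr A(x) = tr A'(x)` everywhere. -/
theorem radon_determines_trace
    (A A' : ℝ × ℝ → Matrix (Fin 2) (Fin 2) ℝ)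
    (hA : ∀ i j, ContDiff ℝ (⊤ : ℕ∞) (fun x => A x i j))
    (hA' : ∀ i j, ContDiff ℝ (⊤ : ℕ∞) (fun x => A' x i j))
    (hAc : ∀ i j, HasCompactSupport (fun x => A x i j))
    (hA'c : ∀ i j, HasCompactSupport (fun x => A' x i j))
    (hAs : ∀ x, (A x).IsSymm) (hA's : ∀ x, (A' x).IsSymm)
    (h : ∀ x : ℝ × ℝ, ∀ r : ℝ, 0 < r → radonS (quadF A) x r = radonS (quadF A') x r) :
    ∀ x : ℝ × ℝ, (A x).trace = (A' x).trace := by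
  intro x
  have h1 : Filter.Tendsto (fun r => radonS (quadF A) x r) (nhdsWithin 0 (Set.Ioi 0))
      (nhds (radonS (quadF A) x 0)) :=
    ((radon_cont A hA x).tendsto 0).mono_left nhdsWithin_le_nhds
  have h2 : Filter.Tendsto (fun r => radonS (quadF A) x r) (nhdsWithin 0 (Set.Ioi 0))
      (nhds (radonS (quadF A') x 0)) := by
    refine Filter.Tendsto.congr' ?_ (((radon_cont A' hA' x).tendsto 0).mono_left nhdsWithin_le_nhds)
    filter_upwards [self_mem_nhdsWithin] with r hr
    exact (h x r hr).symm
  have := tendsto_nhds_unique h1 h2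
  rw [radon_zero, radon_zero] at this
  have := Complex.ofReal_injective this
  exact mul_left_cancel₀ pi_ne_zero this

end
end

section
/- Let h : [−1,1] → ℂ be continuous and suppose ∫_{−1}^{1} t^{2j} h(t) dt = 0 for every integer j ≥ 0. Then h is odd, i.e. h(−t) = −h(t) for every t ∈ [−1,1]. -/
open MeasureTheory Set Polynomial intervalIntegral

/-- If a continuous real function on `[-1,1]` integrates to zero against every real
polynomial, then it vanishes on `[-1,1]`. -/
lemma aux_weier_zero (w : ℝ → ℝ) (hw : ContinuousOn w (Set.Icc (-1:ℝ) 1))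
    (hp : ∀ p : ℝ[X], (∫ t in (-1:ℝ)..1, p.eval t * w t) = 0) :
    Set.EqOn w 0 (Set.Icc (-1:ℝ) 1) := by
  have hle : (-1:ℝ) ≤ 1 := by norm_num
  have huIcc : Set.uIcc (-1:ℝ) 1 = Set.Icc (-1:ℝ) 1 := Set.uIcc_of_le hle
  have huIoc : Set.uIoc (-1:ℝ) 1 = Set.Ioc (-1:ℝ) 1 := Set.uIoc_of_le hle
  obtain ⟨C, hC⟩ := (isCompact_Icc : IsCompact (Set.Icc (-1:ℝ) 1)).exists_bound_of_continuousOn hw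
  set C' : ℝ := |C| + 1 with hC'
  have hC'pos : 0 < C' := by positivity
  have hCb : ∀ x ∈ Set.Icc (-1:ℝ) 1, |w x| ≤ C' := fun x hx =>
    (hC x hx).trans ((le_abs_self C).trans (by linarith))
  have hwint : IntervalIntegrable w volume (-1) 1 :=
    (huIcc ▸ hw).intervalIntegrable
  have hw2int : IntervalIntegrable (fun t => w t * w t) volume (-1) 1 :=
    ((huIcc ▸ hw).mul (huIcc ▸ hw)).intervalIntegrable
  set K : ℝ := ∫ t in (-1:ℝ)..1, w t * w t with hK
  have hKnonneg : 0 ≤ K := by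
    apply intervalIntegral.integral_nonneg hle
    intro x _; exact mul_self_nonneg _
  have hKle : ∀ ε : ℝ, 0 < ε → K ≤ ε * C' * 2 := by
    intro ε hε
    obtain ⟨p, hpnear⟩ := exists_polynomial_near_of_continuousOn (-1) 1 w hw ε hε
    have hpc : ContinuousOn (fun t : ℝ => p.eval t) (Set.uIcc (-1:ℝ) 1) := p.continuousOn
    have hpint : IntervalIntegrable (fun t => p.eval t * w t) volume (-1) 1 :=
      (hpc.mul (huIcc ▸ hw)).intervalIntegrable
    have hdint : IntervalIntegrable (fun t => (w t - p.eval t) * w t) volume (-1) 1 :=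
      (((huIcc ▸ hw).sub hpc).mul (huIcc ▸ hw)).intervalIntegrable
    have hsplit : K = ∫ t in (-1:ℝ)..1, (w t - p.eval t) * w t := by
      rw [hK]
      have : ∀ t : ℝ, w t * w t = (w t - p.eval t) * w t + p.eval t * w t := by
        intro t; ring
      simp only [this]
      rw [intervalIntegral.integral_add hdint hpint, hp p, add_zero]
    have hbound : |∫ t in (-1:ℝ)..1, (w t - p.eval t) * w t| ≤ ε * C' * 2 := by
      have := intervalIntegral.norm_integral_le_of_norm_le_const
        (a := -1) (b := 1) (C := ε * C') (f := fun t => (w t - p.eval t) * w t) ?_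
      · norm_num at this; simpa using this
      · intro x hx
        rw [huIoc] at hx
        have hx' : x ∈ Set.Icc (-1:ℝ) 1 := Set.Ioc_subset_Icc_self hx
        have h1 : |w x - p.eval x| ≤ ε := by
          have := hpnear x hx'
          rw [abs_sub_comm] at this
          exact this.le
        calc ‖(w x - p.eval x) * w x‖ = |w x - p.eval x| * |w x| := abs_mul _ _
          _ ≤ ε * C' := mul_le_mul h1 (hCb x hx') (abs_nonneg _) hε.le
    rw [hsplit]
    exact (le_abs_self _).trans hbound
  have hK0 : K = 0 := by
    by_contra hne
    have hKpos : 0 < K := lt_of_le_of_ne hKnonneg (Ne.symm hne)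
    have := hKle (K / (4 * C')) (by positivity)
    have : K ≤ K / 2 := by
      calc K ≤ K / (4 * C') * C' * 2 := this
        _ = K / 2 := by field_simp; ring
    linarith
  have hset : (∫ t in Set.Ioc (-1:ℝ) 1, w t * w t) = 0 := by
    rw [← intervalIntegral.integral_of_le hle]; exact hK0
  have hinteg : IntegrableOn (fun t => w t * w t) (Set.Ioc (-1:ℝ) 1) volume := hw2int.1
  have hae : (fun t => w t * w t) =ᵐ[volume.restrict (Set.Ioc (-1:ℝ) 1)] 0 := by
    rw [← MeasureTheory.integral_eq_zero_iff_of_nonneg (fun x => mul_self_nonneg _) hinteg]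
    exact hset
  have haew : w =ᵐ[volume.restrict (Set.Icc (-1:ℝ) 1)] 0 := by
    have : volume.restrict (Set.Icc (-1:ℝ) 1) = volume.restrict (Set.Ioc (-1:ℝ) 1) :=
      (Measure.restrict_congr_set (MeasureTheory.Ioc_ae_eq_Icc)).symm
    rw [this]
    filter_upwards [hae] with x hx
    exact mul_self_eq_zero.mp hx
  exact MeasureTheory.Measure.eqOn_Icc_of_ae_eq volume (by norm_num) haew hw continuousOn_const

/-- **Vanishing even moments force oddness.** If `h : [−1,1] → ℂ` is continuous and all
its even moments `∫_{−1}^{1} t^{2j} h(t) dt` vanish, then `h(−t) = −h(t)` on `[−1,1]`. -/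
theorem vanishing_even_moments_implies_odd
    (h : ℝ → ℂ) (hc : ContinuousOn h (Set.Icc (-1 : ℝ) 1))
    (hm : ∀ j : ℕ, (∫ t in (-1 : ℝ)..1, (t : ℂ) ^ (2 * j) * h t) = 0) :
    ∀ t ∈ Set.Icc (-1 : ℝ) 1, h (-t) = -h t := by
  have hle : (-1:ℝ) ≤ 1 := by norm_num
  have huIcc : Set.uIcc (-1:ℝ) 1 = Set.Icc (-1:ℝ) 1 := Set.uIcc_of_le hle
  have hmaps : ∀ t ∈ Set.Icc (-1:ℝ) 1, -t ∈ Set.Icc (-1:ℝ) 1 := by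
    intro t ht; simp only [Set.mem_Icc] at *; constructor <;> linarith [ht.1, ht.2]
  have hcn : ContinuousOn (fun t => h (-t)) (Set.Icc (-1:ℝ) 1) :=
    hc.comp continuousOn_neg hmaps
  set g : ℝ → ℂ := fun t => h t + h (-t) with hgdef
  have hgc : ContinuousOn g (Set.Icc (-1:ℝ) 1) := hc.add hcn
  have hint : ∀ n : ℕ, IntervalIntegrable (fun t => (t:ℂ)^n * h t) volume (-1) 1 :=
    fun n => ((Complex.continuous_ofReal.pow n).continuousOn.mul (huIcc ▸ hc)).intervalIntegrable
  have hintn : ∀ n : ℕ, IntervalIntegrable (fun t => (t:ℂ)^n * h (-t)) volume (-1) 1 :=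
    fun n => ((Complex.continuous_ofReal.pow n).continuousOn.mul (huIcc ▸ hcn)).intervalIntegrable
  -- all moments of `g` vanish
  have hneg : ∀ n : ℕ, (∫ t in (-1:ℝ)..1, (t:ℂ)^n * h (-t))
      = (-1:ℂ)^n * ∫ t in (-1:ℝ)..1, (t:ℂ)^n * h t := by
    intro n
    have key := intervalIntegral.integral_comp_neg (a := (-1:ℝ)) (b := 1)
      (fun t => (t:ℂ)^n * h t)
    rw [neg_neg] at key
    have lhs : (∫ x in (-1:ℝ)..1, ((-x : ℝ):ℂ)^n * h (-x))
        = (-1:ℂ)^n * ∫ x in (-1:ℝ)..1, (x:ℂ)^n * h (-x) := by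
      rw [← intervalIntegral.integral_const_mul]
      congr 1; ext x
      push_cast
      ring
    rw [lhs] at key
    have hunit : (-1:ℂ)^n * (-1:ℂ)^n = 1 := by
      rw [← mul_pow]; norm_num
    calc (∫ t in (-1:ℝ)..1, (t:ℂ)^n * h (-t))
        = ((-1:ℂ)^n * (-1:ℂ)^n) * ∫ t in (-1:ℝ)..1, (t:ℂ)^n * h (-t) := by rw [hunit, one_mul]
      _ = (-1:ℂ)^n * ((-1:ℂ)^n * ∫ t in (-1:ℝ)..1, (t:ℂ)^n * h (-t)) := by ring
      _ = (-1:ℂ)^n * ∫ t in (-1:ℝ)..1, (t:ℂ)^n * h t := by rw [key]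
  have hg0 : ∀ n : ℕ, (∫ t in (-1:ℝ)..1, (t:ℂ)^n * g t) = 0 := by
    intro n
    have hsplit : (∫ t in (-1:ℝ)..1, (t:ℂ)^n * g t)
        = (∫ t in (-1:ℝ)..1, (t:ℂ)^n * h t) + ∫ t in (-1:ℝ)..1, (t:ℂ)^n * h (-t) := by
      rw [← intervalIntegral.integral_add (hint n) (hintn n)]
      congr 1; ext t; simp only [hgdef]; ring
    rw [hsplit, hneg n]
    rcases Nat.even_or_odd n with he | ho
    · obtain ⟨j, hj⟩ := he
      have : n = 2 * j := by omega
      rw [this] at *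
      rw [hm j]
      simp
    · rw [ho.neg_one_pow]
      ring
  -- real and imaginary parts of `g` have vanishing moments
  have hgint : ∀ n : ℕ, IntervalIntegrable (fun t => (t:ℂ)^n * g t) volume (-1) 1 :=
    fun n => ((Complex.continuous_ofReal.pow n).continuousOn.mul (huIcc ▸ hgc)).intervalIntegrable
  have hrc : ContinuousOn (fun t => (g t).re) (Set.Icc (-1:ℝ) 1) :=
    Complex.continuous_re.comp_continuousOn hgc
  have hic : ContinuousOn (fun t => (g t).im) (Set.Icc (-1:ℝ) 1) :=
    Complex.continuous_im.comp_continuousOn hgc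
  have hmom : ∀ n : ℕ, (∫ t in (-1:ℝ)..1, t^n * (g t).re) = 0
      ∧ (∫ t in (-1:ℝ)..1, t^n * (g t).im) = 0 := by
    intro n
    set F : ℝ → ℂ := fun t => (t:ℂ)^n * g t with hF
    have hInt : Integrable F (volume.restrict (Set.Ioc (-1:ℝ) 1)) :=
      (hgint n).1
    have e0 : (∫ t in Set.Ioc (-1:ℝ) 1, F t) = 0 := by
      rw [← intervalIntegral.integral_of_le hle]; exact hg0 n
    constructor
    · have := integral_re hInt
      rw [e0] at this
      norm_num at this
      rw [intervalIntegral.integral_of_le hle, ← this]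
      congr 1; ext t
      simp only [hF, RCLike.re_to_complex, ← Complex.ofReal_pow, Complex.re_ofReal_mul]
    · have := integral_im hInt
      rw [e0] at this
      norm_num at this
      rw [intervalIntegral.integral_of_le hle, ← this]
      congr 1; ext t
      simp only [hF, RCLike.im_to_complex, ← Complex.ofReal_pow, Complex.im_ofReal_mul]
  -- hence they integrate to zero against every polynomial
  have hpoly : ∀ (w : ℝ → ℝ), ContinuousOn w (Set.Icc (-1:ℝ) 1) →
      (∀ n : ℕ, (∫ t in (-1:ℝ)..1, t^n * w t) = 0) →
      ∀ p : ℝ[X], (∫ t in (-1:ℝ)..1, p.eval t * w t) = 0 := by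
    intro w hw hmw p
    have hrw : (fun t : ℝ => p.eval t * w t)
        = fun t => ∑ i ∈ Finset.range (p.natDegree + 1), p.coeff i * (t^i * w t) := by
      ext t
      rw [Polynomial.eval_eq_sum_range, Finset.sum_mul]
      exact Finset.sum_congr rfl fun i _ => by ring
    rw [hrw, intervalIntegral.integral_finset_sum]
    · refine Finset.sum_eq_zero fun i _ => ?_
      rw [intervalIntegral.integral_const_mul, hmw i, mul_zero]
    · intro i _
      exact (((continuous_pow i).continuousOn.mul (huIcc ▸ hw)).intervalIntegrable).const_mul _
  -- so both parts vanish on `[-1,1]`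
  have hre0 := aux_weier_zero _ hrc (hpoly _ hrc fun n => (hmom n).1)
  have him0 := aux_weier_zero _ hic (hpoly _ hic fun n => (hmom n).2)
  intro t ht
  have h1 := hre0 ht
  have h2 := him0 ht
  simp only [Pi.zero_apply] at h1 h2
  have hgt : g t = 0 := Complex.ext h1 h2
  have : h t + h (-t) = 0 := hgt
  exact eq_neg_of_add_eq_zero_right this
end

section
/- Let g : ℝ → ℂ be continuous and π-periodic, i.e. g(θ+π) = g(θ) for all θ ∈ ℝ, and suppose ∫₀^{2π} e^{i r cos θ} g(θ) dθ = 0 for every r ≥ 0. Then g(π/2 − θ) = −g(π/2 + θ) for every θ ∈ [0, π/2]. -/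
open MeasureTheory Real

lemma aux_coeff_zero (a : ℕ → ℂ) (hs : Summable (fun k => ‖a k‖))
    (h : ∀ x : ℝ, 0 < x → x ≤ 1 → ∑' k, a k * (x : ℂ) ^ k = 0) :
    ∀ k, a k = 0 := by
  intro k
  induction k using Nat.strong_induction_on with
  | _ k ih =>
    -- For 0 < x ≤ 1: summability of terms
    have hsum : ∀ x : ℝ, 0 < x → x ≤ 1 → Summable (fun j => a j * (x : ℂ) ^ j) := by
      intro x hx hx1
      apply Summable.of_norm
      apply hs.of_nonneg_of_le (fun j => norm_nonneg _)
      intro j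
      rw [norm_mul, norm_pow]
      have : ‖(x : ℂ)‖ ≤ 1 := by
        rw [Complex.norm_real, Real.norm_of_nonneg hx.le]; exact hx1
      calc ‖a j‖ * ‖(x:ℂ)‖ ^ j ≤ ‖a j‖ * 1 := by
            apply mul_le_mul_of_nonneg_left _ (norm_nonneg _)
            exact pow_le_one₀ (norm_nonneg _) this
        _ = ‖a j‖ := mul_one _
    -- key bound: ‖a k‖ ≤ x * S for all 0 < x ≤ 1
    set S := ∑' j, ‖a (j + (k+1))‖ with hS
    have hSsum : Summable (fun j => ‖a (j + (k+1))‖) := hs.comp_injective (add_left_injective _)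
    have key : ∀ x : ℝ, 0 < x → x ≤ 1 → ‖a k‖ ≤ x * S := by
      intro x hx hx1
      have hx0 : (x:ℂ) ≠ 0 := by exact_mod_cast hx.ne'
      have hsx := hsum x hx hx1
      have h0 := h x hx hx1
      -- shift: ∑' j, a (j+k) x^(j+k) = ∑' - finite sum
      have hsplit := Summable.sum_add_tsum_nat_add k hsx
      have hfin : ∑ j ∈ Finset.range k, a j * (x:ℂ)^j = 0 := by
        apply Finset.sum_eq_zero
        intro j hj
        rw [ih j (Finset.mem_range.mp hj), zero_mul]
      rw [h0, hfin, zero_add] at hsplit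
      -- hsplit : ∑' j, a (j + k) * x ^ (j + k) = 0
      have hfactor : ∀ j : ℕ, a (j + k) * (x:ℂ) ^ (j + k) = (x:ℂ)^k * (a (j + k) * (x:ℂ)^j) := by
        intro j; rw [pow_add]; ring
      rw [tsum_congr hfactor, tsum_mul_left, mul_eq_zero] at hsplit
      have hsplit' : ∑' j, a (j + k) * (x:ℂ) ^ j = 0 := by
        rcases hsplit with h1 | h2
        · exact absurd h1 (pow_ne_zero _ hx0)
        · exact h2
      have hsx2 : Summable (fun j => a (j + k) * (x:ℂ) ^ j) := by
        apply Summable.of_norm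
        apply Summable.of_nonneg_of_le (fun j => norm_nonneg _) _
          (hs.comp_injective (add_left_injective k))
        intro j
        rw [norm_mul, norm_pow]
        have hxc : ‖(x : ℂ)‖ ≤ 1 := by
          rw [Complex.norm_real, Real.norm_of_nonneg hx.le]; exact hx1
        calc ‖a (j + k)‖ * ‖(x:ℂ)‖ ^ j ≤ ‖a (j + k)‖ * 1 :=
              mul_le_mul_of_nonneg_left (pow_le_one₀ (norm_nonneg _) hxc) (norm_nonneg _)
          _ = _ := mul_one _
      have hzero := Summable.tsum_eq_zero_add hsx2
      rw [hsplit'] at hzero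
      -- 0 = a k * x^0 + ∑' j, a (j+1+k) x^(j+1)
      simp only [zero_add, pow_zero, mul_one] at hzero
      have : a k = -∑' j, a (j + 1 + k) * (x:ℂ) ^ (j + 1) := by linear_combination -hzero
      rw [this, norm_neg]
      calc ‖∑' j, a (j + 1 + k) * (x:ℂ) ^ (j+1)‖
          ≤ ∑' j, ‖a (j + 1 + k) * (x:ℂ) ^ (j+1)‖ := norm_tsum_le_tsum_norm (by
            apply hSsum.of_nonneg_of_le (fun j => norm_nonneg _)
            intro j
            rw [norm_mul, norm_pow]
            have hxc : ‖(x : ℂ)‖ ≤ 1 := by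
              rw [Complex.norm_real, Real.norm_of_nonneg hx.le]; exact hx1
            have : a (j + 1 + k) = a (j + (k+1)) := by ring_nf
            rw [this]
            calc ‖a (j + (k+1))‖ * ‖(x:ℂ)‖^(j+1) ≤ ‖a (j+(k+1))‖ * 1 :=
                  mul_le_mul_of_nonneg_left (pow_le_one₀ (norm_nonneg _) hxc) (norm_nonneg _)
              _ = _ := mul_one _)
        _ ≤ ∑' j, ‖a (j + (k+1))‖ * x := by
            apply Summable.tsum_le_tsum _ _ (hSsum.mul_right x)
            · intro j
              rw [norm_mul, norm_pow, Complex.norm_real, Real.norm_of_nonneg hx.le]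
              have : a (j + 1 + k) = a (j + (k+1)) := by ring_nf
              rw [this]
              apply mul_le_mul_of_nonneg_left _ (norm_nonneg _)
              calc x ^ (j+1) ≤ x ^ 1 := pow_le_pow_of_le_one hx.le hx1 (by omega)
                _ = x := pow_one x
            · apply Summable.of_nonneg_of_le (fun j => norm_nonneg _) _ hSsum
              intro j
              rw [norm_mul, norm_pow, Complex.norm_real, Real.norm_of_nonneg hx.le]
              have : a (j + 1 + k) = a (j + (k+1)) := by ring_nf
              rw [this]
              calc ‖a (j+(k+1))‖ * x^(j+1) ≤ ‖a (j+(k+1))‖ * 1 :=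
                    mul_le_mul_of_nonneg_left (pow_le_one₀ hx.le hx1) (norm_nonneg _)
                _ = _ := mul_one _
        _ = S * x := tsum_mul_right
        _ = x * S := mul_comm _ _
    -- conclude a k = 0
    by_contra hne
    have hS0 : 0 ≤ S := tsum_nonneg (fun j => norm_nonneg _)
    have hpos : 0 < ‖a k‖ := norm_pos_iff.mpr hne
    rcases eq_or_lt_of_le hS0 with hS1 | hS1
    · have := key 1 one_pos le_rfl
      rw [← hS1, mul_zero] at this
      exact absurd this (not_le.mpr hpos)
    · set x := min 1 (‖a k‖ / (2 * S)) with hxdef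
      have hx0 : 0 < x := lt_min one_pos (by positivity)
      have hx1 : x ≤ 1 := min_le_left _ _
      have := key x hx0 hx1
      have hle : x * S ≤ (‖a k‖ / (2 * S)) * S := by
        apply mul_le_mul_of_nonneg_right (min_le_right _ _) hS0
      have : ‖a k‖ ≤ ‖a k‖ / 2 := by
        calc ‖a k‖ ≤ x * S := this
          _ ≤ (‖a k‖ / (2*S)) * S := hle
          _ = ‖a k‖ / 2 := by field_simp
      linarith

lemma sw_vanish (u : ℝ → ℝ) (hu : Continuous u)
    (hm : ∀ k : ℕ, ∫ θ in (0:ℝ)..(π/2), (Real.cos θ)^(2*k) * u θ = 0) :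
    ∀ x ∈ Set.Icc (0:ℝ) (π/2), u x = 0 := by
  have hpi2 : (0:ℝ) < π / 2 := by positivity
  have hpi : (0:ℝ) ≤ π / 2 := hpi2.le
  set K := Set.Icc (0:ℝ) (π/2) with hK
  let w : C(K, ℝ) := ⟨fun x => Real.cos (x:ℝ) ^ 2, by fun_prop⟩
  let A := Algebra.adjoin ℝ ({w} : Set C(K,ℝ))
  have hsep : A.SeparatesPoints := by
    intro x y hxy
    refine ⟨_, ⟨w, Algebra.self_mem_adjoin_singleton ℝ w, rfl⟩, ?_⟩
    have hxK : (x:ℝ) ∈ Set.Icc 0 π := ⟨x.2.1, x.2.2.trans (by linarith [pi_pos])⟩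
    have hyK : (y:ℝ) ∈ Set.Icc 0 π := ⟨y.2.1, y.2.2.trans (by linarith [pi_pos])⟩
    have hcx : 0 ≤ Real.cos (x:ℝ) := Real.cos_nonneg_of_mem_Icc ⟨by linarith [x.2.1, pi_pos], x.2.2⟩
    have hcy : 0 ≤ Real.cos (y:ℝ) := Real.cos_nonneg_of_mem_Icc ⟨by linarith [y.2.1, pi_pos], y.2.2⟩
    intro h
    apply hxy
    have h2 : Real.cos (x:ℝ) = Real.cos (y:ℝ) := by
      have : Real.cos (x:ℝ) ^ 2 = Real.cos (y:ℝ) ^ 2 := h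
      nlinarith
    exact Subtype.ext (Real.injOn_cos hxK hyK h2)
  -- bound on u
  obtain ⟨M, hM⟩ : ∃ M : ℝ, ∀ θ ∈ K, |u θ| ≤ M := by
    obtain ⟨M, hM⟩ := isCompact_Icc.exists_bound_of_continuousOn (hu.continuousOn (s := K))
    exact ⟨M, fun θ hθ => hM θ hθ⟩
  have hM0 : 0 ≤ M := le_trans (abs_nonneg _) (hM 0 ⟨le_rfl, hpi⟩)
  -- the functional
  let e : ℝ → K := fun θ => Set.projIcc 0 (π/2) hpi θ
  let Φ : C(K, ℝ) → ℝ := fun f => ∫ θ in (0:ℝ)..(π/2), f (e θ) * u θ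
  have hinteg : ∀ f : C(K,ℝ), IntervalIntegrable (fun θ => f (e θ) * u θ) volume 0 (π/2) :=
    fun f => ((f.continuous.comp (continuous_projIcc)).mul hu).intervalIntegrable _ _
  have hΦcont : Continuous Φ := by
    apply LipschitzWith.continuous (K := ⟨max (M * (π/2)) 0, le_max_right _ _⟩)
    apply LipschitzWith.of_dist_le_mul
    intro f f'
    rw [Real.dist_eq]
    have : Φ f - Φ f' = ∫ θ in (0:ℝ)..(π/2), (f (e θ) - f' (e θ)) * u θ := by
      rw [← intervalIntegral.integral_sub (hinteg f) (hinteg f')]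
      congr 1; ext θ; ring
    rw [this]
    have hb : ∀ θ ∈ Set.uIoc (0:ℝ) (π/2), ‖(f (e θ) - f' (e θ)) * u θ‖ ≤ dist f f' * M := by
      intro θ hθ
      rw [Set.uIoc_of_le hpi] at hθ
      have hθK : θ ∈ K := ⟨hθ.1.le, hθ.2⟩
      rw [norm_mul]
      have h1 : ‖f (e θ) - f' (e θ)‖ ≤ dist f f' := by
        rw [← dist_eq_norm]; exact ContinuousMap.dist_apply_le_dist _
      have h2 : ‖u θ‖ ≤ M := by rw [Real.norm_eq_abs]; exact hM θ hθK
      exact mul_le_mul h1 h2 (norm_nonneg _) dist_nonneg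
    calc |∫ θ in (0:ℝ)..(π/2), (f (e θ) - f' (e θ)) * u θ|
        ≤ dist f f' * M * |π/2 - 0| := intervalIntegral.norm_integral_le_of_norm_le_const hb
      _ = (M * (π/2)) * dist f f' := by rw [sub_zero, abs_of_nonneg hpi]; ring
      _ ≤ max (M * (π/2)) 0 * dist f f' := by
          apply mul_le_mul_of_nonneg_right (le_max_left _ _) dist_nonneg
  have hA0 : ∀ f ∈ A, Φ f = 0 := by
    intro f hf
    rw [show A = Algebra.adjoin ℝ ({w} : Set C(K,ℝ)) from rfl,
      Algebra.adjoin_singleton_eq_range_aeval] at hf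
    obtain ⟨p, rfl⟩ := hf
    have hcongr : Set.EqOn (fun θ => (Polynomial.aeval w p) (e θ) * u θ)
        (fun θ => ∑ i ∈ Finset.range (p.natDegree + 1),
          p.coeff i * ((Real.cos θ) ^ (2*i) * u θ)) (Set.uIcc 0 (π/2)) := by
      intro θ hθ
      rw [Set.uIcc_of_le hpi] at hθ
      have he : ((e θ : K) : ℝ) = θ := by
        simp only [e, Set.projIcc_of_mem hpi hθ]
      simp only [Polynomial.aeval_continuousMap_apply]
      have hw : w (e θ) = Real.cos θ ^ 2 := by
        show Real.cos ((e θ : K) : ℝ) ^ 2 = _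
        rw [he]
      rw [hw, Polynomial.eval_eq_sum_range, Finset.sum_mul]
      congr 1; ext i
      rw [← pow_mul]
      ring
    show (∫ θ in (0:ℝ)..(π/2), ((Polynomial.aeval w) p) (e θ) * u θ) = 0
    rw [intervalIntegral.integral_congr hcongr, intervalIntegral.integral_finset_sum]
    · apply Finset.sum_eq_zero
      intro i _
      rw [intervalIntegral.integral_const_mul, hm i, mul_zero]
    · intro i _
      apply Continuous.intervalIntegrable
      fun_prop
  have hall : ∀ f : C(K,ℝ), Φ f = 0 := by
    have hclosed : IsClosed (Φ ⁻¹' {0}) := (isClosed_singleton).preimage hΦcont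
    have hsub : (A.topologicalClosure : Set C(K,ℝ)) ⊆ Φ ⁻¹' {0} := by
      rw [Subalgebra.topologicalClosure_coe]
      apply hclosed.closure_subset_iff.mpr
      intro f hf
      exact hA0 f hf
    have htop := ContinuousMap.subalgebra_topologicalClosure_eq_top_of_separatesPoints A hsep
    intro f
    have : f ∈ (A.topologicalClosure : Set C(K,ℝ)) := by rw [htop]; trivial
    exact hsub this
  -- apply with f = restriction of u
  have hu2 : ∫ θ in (0:ℝ)..(π/2), u θ ^ 2 = 0 := by
    set f0 : C(K, ℝ) := ⟨fun x => u (x:ℝ), hu.comp continuous_subtype_val⟩ with hf0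
    have hcg : Φ f0 = ∫ θ in (0:ℝ)..(π/2), u θ ^ 2 := by
      apply intervalIntegral.integral_congr
      intro θ hθ
      rw [Set.uIcc_of_le hpi] at hθ
      have he : ((e θ : K) : ℝ) = θ := by
        simp only [e, Set.projIcc_of_mem hpi hθ]
      show u ((e θ : K) : ℝ) * u θ = u θ ^ 2
      rw [he]; ring
    rw [← hcg]
    exact hall f0
  -- conclude u = 0 on K
  intro x hx
  by_contra hne
  have hopen : IsOpen {y : ℝ | u y ≠ 0} := isOpen_ne_fun hu continuous_const
  obtain ⟨δ, hδ0, hδ⟩ := Metric.isOpen_iff.mp hopen x hne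
  set a := max (x - δ/2) 0 with ha
  set b := min (x + δ/2) (π/2) with hb
  have hab : a < b := by
    apply max_lt <;> apply lt_min
    · linarith
    · linarith [hx.2]
    · linarith [hx.1]
    · exact hpi2
  have ha0 : 0 ≤ a := le_max_right _ _
  have hbpi : b ≤ π/2 := min_le_right _ _
  have hpos : ∀ y ∈ Set.Ioo a b, 0 < u y ^ 2 := by
    intro y hy
    have h1 : x - δ/2 < y := lt_of_le_of_lt (le_max_left _ _) hy.1
    have h2 : y < x + δ/2 := lt_of_lt_of_le hy.2 (min_le_left _ _)
    have : y ∈ Metric.ball x δ := by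
      rw [Metric.mem_ball, Real.dist_eq, abs_lt]; constructor <;> linarith
    have hne' : u y ≠ 0 := hδ this
    exact pow_two_pos_of_ne_zero hne'
  have hsq_int : ∀ c d : ℝ, IntervalIntegrable (fun θ => u θ ^ 2) volume c d :=
    fun c d => (hu.pow 2).intervalIntegrable _ _
  have hmid : 0 < ∫ θ in a..b, u θ ^ 2 :=
    intervalIntegral.intervalIntegral_pos_of_pos_on (hsq_int a b) hpos hab
  have h1 : 0 ≤ ∫ θ in (0:ℝ)..a, u θ ^ 2 :=
    intervalIntegral.integral_nonneg ha0 (fun θ _ => sq_nonneg _)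
  have h2 : 0 ≤ ∫ θ in b..(π/2), u θ ^ 2 :=
    intervalIntegral.integral_nonneg hbpi (fun θ _ => sq_nonneg _)
  have hsplit : ∫ θ in (0:ℝ)..(π/2), u θ ^ 2 =
      (∫ θ in (0:ℝ)..a, u θ ^ 2) + (∫ θ in a..b, u θ ^ 2) + (∫ θ in b..(π/2), u θ ^ 2) := by
    rw [intervalIntegral.integral_add_adjacent_intervals (hsq_int 0 a) (hsq_int a b),
      intervalIntegral.integral_add_adjacent_intervals (hsq_int 0 b) (hsq_int b (π/2))]
  rw [hu2] at hsplit
  linarith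

/-- **Vanishing oscillatory integrals force antisymmetry about `π/2`.** If `g : ℝ → ℂ` is
continuous and `π`-periodic and `∫₀^{2π} e^{i r cos θ} g(θ) dθ = 0` for every `r ≥ 0`,
then `g(π/2 − θ) = −g(π/2 + θ)` for every `θ ∈ [0, π/2]`. -/
theorem oscillatory_vanishing_implies_antisymmetric
    (g : ℝ → ℂ) (hg : Continuous g) (hper : ∀ θ : ℝ, g (θ + π) = g θ)
    (hint : ∀ r : ℝ, 0 ≤ r →
      (∫ θ in (0 : ℝ)..(2 * π),
        Complex.exp (Complex.I * ((r * Real.cos θ : ℝ) : ℂ)) * g θ) = 0) :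
    ∀ θ ∈ Set.Icc (0 : ℝ) (π / 2), g (π / 2 - θ) = -g (π / 2 + θ) := by
  have hmom : ∀ k : ℕ, (∫ θ in (0:ℝ)..(2*π), ((Real.cos θ : ℂ))^(2*k) * g θ) = 0 := by

      have hpi : (0:ℝ) ≤ 2 * π := by positivity
      set F : ℝ → ℝ → ℂ := fun r θ => Complex.exp (Complex.I * ((r * Real.cos θ : ℝ) : ℂ)) * g θ
        with hFdef
      have hg2per : ∀ θ, g (θ + 2*π) = g θ := by
        intro θ; rw [show θ + 2*π = θ + π + π by ring, hper, hper]
      have hFper : ∀ r, Function.Periodic (F r) (2*π) := by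
        intro r θ
        simp only [F, hg2per, Real.cos_add_two_pi]
      have hFcont : ∀ r, Continuous (F r) := by
        intro r
        apply Continuous.mul _ hg
        exact Complex.continuous_exp.comp (by fun_prop)
      have hI : ∀ r : ℝ, (∫ θ in (0:ℝ)..(2*π), F r θ) = 0 := by
        intro r
        rcases le_or_gt 0 r with h | h
        · exact hint r h
        · have hshift : ∀ θ, F r (θ + π) = F (-r) θ := by
            intro θ
            simp only [F, Real.cos_add_pi, hper]
            congr 2
            push_cast
            ring
          have e3 : (∫ θ in (0:ℝ)..(2*π), F (-r) θ) = ∫ θ in (0:ℝ)..(2*π), F r θ := by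
            calc (∫ θ in (0:ℝ)..(2*π), F (-r) θ)
                = ∫ θ in (0:ℝ)..(2*π), F r (θ + π) :=
                  intervalIntegral.integral_congr (fun θ _ => (hshift θ).symm)
              _ = ∫ θ in (0:ℝ)+π..(2*π)+π, F r θ :=
                  intervalIntegral.integral_comp_add_right (fun θ => F r θ) π
              _ = ∫ θ in (π:ℝ)..(π+2*π), F r θ := by
                  rw [show (0:ℝ)+π = π by ring, show (2*π)+π = π+2*π by ring]
              _ = ∫ θ in (0:ℝ)..(0+2*π), F r θ := (hFper r).intervalIntegral_add_eq π 0
              _ = ∫ θ in (0:ℝ)..(2*π), F r θ := by rw [zero_add]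
          rw [← e3]
          exact hint (-r) (by linarith)
      -- moments over Ioc
      set μ : Measure ℝ := volume.restrict (Set.Ioc 0 (2*π)) with hμ
      set m : ℕ → ℂ := fun k => ∫ θ, ((Real.cos θ : ℂ))^(2*k) * g θ ∂μ with hm
      set C : ℝ := ∫ θ, ‖g θ‖ ∂μ with hC
      have hgi : Integrable g μ := hg.integrableOn_Ioc (μ := volume)
      have hmb : ∀ k, ‖m k‖ ≤ C := by
        intro k
        calc ‖m k‖ ≤ ∫ θ, ‖((Real.cos θ : ℂ))^(2*k) * g θ‖ ∂μ := norm_integral_le_integral_norm _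
          _ ≤ C := by
            apply integral_mono_of_nonneg (Filter.Eventually.of_forall fun θ => norm_nonneg _)
              hgi.norm
            apply Filter.Eventually.of_forall
            intro θ
            show ‖((Real.cos θ:ℝ):ℂ)^(2*k) * g θ‖ ≤ ‖g θ‖
            rw [norm_mul, norm_pow, Complex.norm_real, Real.norm_eq_abs]
            calc |Real.cos θ| ^ (2*k) * ‖g θ‖ ≤ 1 * ‖g θ‖ :=
                  mul_le_mul_of_nonneg_right
                    (pow_le_one₀ (abs_nonneg _) (Real.abs_cos_le_one θ)) (norm_nonneg _)
              _ = ‖g θ‖ := one_mul _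
      -- coefficients
      set a : ℕ → ℂ := fun k => ((-1:ℂ)^k / ((2*k).factorial : ℂ)) * m k with ha
      have hCnn : 0 ≤ C := integral_nonneg (fun θ => norm_nonneg _)
      have hfacsum : Summable (fun k : ℕ => C / ((2*k).factorial : ℝ)) := by
        have h1 : Summable (fun n : ℕ => (1:ℝ)^n / n.factorial) := Real.summable_pow_div_factorial 1
        simp only [one_pow] at h1
        have h2 : Summable ((fun n : ℕ => 1 / (n.factorial : ℝ)) ∘ (fun k => 2*k)) :=
          h1.comp_injective (fun k l h => by omega)
        apply (h2.mul_left C).congr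
        intro k
        simp only [Function.comp]
        ring
      have hasum : Summable (fun k => ‖a k‖) := by
        apply Summable.of_nonneg_of_le (fun k => norm_nonneg _) _ hfacsum
        intro k
        simp only [ha, norm_mul, norm_div, norm_pow, norm_neg, norm_one, one_pow,
          Complex.norm_natCast]
        rw [one_div, inv_mul_eq_div, div_le_div_iff_of_pos_right]
        · exact hmb k
        · exact_mod_cast Nat.factorial_pos _
      -- key: power series vanishes on (0,1]
      have hkey : ∀ x : ℝ, 0 < x → x ≤ 1 → ∑' k, a k * (x:ℂ)^k = 0 := by
        intro x hx hx1
        set r : ℝ := Real.sqrt x with hr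
        have hr0 : 0 ≤ r := Real.sqrt_nonneg x
        have hr1 : r ≤ 1 := by
          rw [hr, show (1:ℝ) = Real.sqrt 1 by simp]
          exact Real.sqrt_le_sqrt hx1
        set Fk : ℕ → ℝ → ℂ := fun k θ =>
          ((-1:ℂ)^k * ((r * Real.cos θ : ℝ) : ℂ)^(2*k) / ((2*k).factorial : ℂ)) * g θ with hFk
        have hFkcont : ∀ k, Continuous (Fk k) := by
          intro k
          apply Continuous.mul _ hg
          fun_prop
        have hFkint : ∀ k, Integrable (Fk k) μ := fun k => (hFkcont k).integrableOn_Ioc (μ := volume)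
        have hFkbound : ∀ k θ, ‖Fk k θ‖ ≤ (1 / ((2*k).factorial : ℝ)) * ‖g θ‖ := by
          intro k θ
          simp only [hFk, norm_mul, norm_div, norm_pow, norm_neg, norm_one, one_pow,
            Complex.norm_natCast, Complex.norm_real, Real.norm_eq_abs, one_mul]
          have h1 : |r| * |Real.cos θ| ≤ 1 := by
            rw [abs_of_nonneg hr0]
            calc r * |Real.cos θ| ≤ 1 * 1 :=
                  mul_le_mul hr1 (Real.abs_cos_le_one θ) (abs_nonneg _) zero_le_one
              _ = 1 := one_mul _
          have h2 : (|r| * |Real.cos θ|) ^ (2*k) ≤ 1 :=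
            pow_le_one₀ (mul_nonneg (abs_nonneg _) (abs_nonneg _)) h1
          have h3 : (0:ℝ) < ((2*k).factorial : ℝ) := by exact_mod_cast Nat.factorial_pos _
          apply mul_le_mul_of_nonneg_right _ (norm_nonneg _)
          rw [div_le_div_iff_of_pos_right h3]
          exact h2
        have hFsum : Summable (fun k => ∫ θ, ‖Fk k θ‖ ∂μ) := by
          apply Summable.of_nonneg_of_le
            (fun k => integral_nonneg fun θ => norm_nonneg _) _ hfacsum
          intro k
          calc (∫ θ, ‖Fk k θ‖ ∂μ) ≤ ∫ θ, (1/((2*k).factorial :ℝ)) * ‖g θ‖ ∂μ :=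
                integral_mono_of_nonneg (Filter.Eventually.of_forall fun θ => norm_nonneg _)
                  (hgi.norm.const_mul _) (Filter.Eventually.of_forall (hFkbound k))
            _ = 1/((2*k).factorial : ℝ) * C := by rw [MeasureTheory.integral_const_mul]
            _ = C / ((2*k).factorial : ℝ) := by ring
        have htsum := integral_tsum_of_summable_integral_norm hFkint hFsum
        have hptwise : ∀ θ : ℝ, (∑' k, Fk k θ) = Complex.cos ((r * Real.cos θ : ℝ):ℂ) * g θ :=
          fun θ => ((Complex.hasSum_cos _).mul_right (g θ)).tsum_eq
        have hcos0 : (∫ θ, Complex.cos ((r * Real.cos θ : ℝ):ℂ) * g θ ∂μ) = 0 := by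
          have hexp : ∀ θ, Complex.cos ((r * Real.cos θ : ℝ):ℂ) * g θ
              = (1/2 : ℂ) * (F r θ + F (-r) θ) := by
            intro θ
            have h2c := Complex.two_cos (x := ((r * Real.cos θ : ℝ):ℂ))
            simp only [hFdef]
            have harg2 : Complex.exp (-((r * Real.cos θ : ℝ):ℂ) * Complex.I)
                = Complex.exp (Complex.I * (((-r) * Real.cos θ:ℝ):ℂ)) := by
              congr 1
              push_cast
              ring
            have harg1 : Complex.exp (((r * Real.cos θ : ℝ):ℂ) * Complex.I)
                = Complex.exp (Complex.I * ((r * Real.cos θ:ℝ):ℂ)) := by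
              congr 1
              ring
            rw [← harg1, ← harg2]
            linear_combination (g θ / 2) * h2c
          calc (∫ θ, Complex.cos ((r * Real.cos θ : ℝ):ℂ) * g θ ∂μ)
              = ∫ θ, (1/2:ℂ) * (F r θ + F (-r) θ) ∂μ :=
                integral_congr_ae (Filter.Eventually.of_forall hexp)
            _ = (1/2:ℂ) * ((∫ θ, F r θ ∂μ) + ∫ θ, F (-r) θ ∂μ) := by
                rw [MeasureTheory.integral_const_mul, integral_add
                  ((hFcont r).integrableOn_Ioc (μ := volume))
                  ((hFcont (-r)).integrableOn_Ioc (μ := volume))]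
            _ = 0 := by
                have i1 : (∫ θ, F r θ ∂μ) = 0 := by
                  rw [hμ, ← intervalIntegral.integral_of_le hpi]; exact hI r
                have i2 : (∫ θ, F (-r) θ ∂μ) = 0 := by
                  rw [hμ, ← intervalIntegral.integral_of_le hpi]; exact hI (-r)
                rw [i1, i2]; ring
        have hxr : ((r:ℝ):ℂ)^2 = ((x:ℝ):ℂ) := by
          norm_cast
          rw [Real.sq_sqrt hx.le]
        have hintFk : ∀ k, (∫ θ, Fk k θ ∂μ) = a k * ((x:ℝ):ℂ)^k := by
          intro k
          have heq : ∀ θ, Fk k θ = ((-1:ℂ)^k * ((r:ℝ):ℂ)^(2*k) / ((2*k).factorial : ℂ)) *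
              (((Real.cos θ:ℝ):ℂ)^(2*k) * g θ) := by
            intro θ
            simp only [hFk]
            push_cast
            ring
          calc (∫ θ, Fk k θ ∂μ)
              = ∫ θ, ((-1:ℂ)^k * ((r:ℝ):ℂ)^(2*k) / ((2*k).factorial : ℂ)) *
                  (((Real.cos θ:ℝ):ℂ)^(2*k) * g θ) ∂μ :=
                integral_congr_ae (Filter.Eventually.of_forall heq)
            _ = ((-1:ℂ)^k * ((r:ℝ):ℂ)^(2*k) / ((2*k).factorial : ℂ)) * m k := by
                rw [MeasureTheory.integral_const_mul]
            _ = a k * ((x:ℝ):ℂ)^k := by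
                simp only [ha]
                rw [pow_mul, hxr]
                ring
        calc (∑' k, a k * (x:ℂ)^k) = ∑' k, ∫ θ, Fk k θ ∂μ :=
              tsum_congr (fun k => (hintFk k).symm)
          _ = ∫ θ, (∑' k, Fk k θ) ∂μ := htsum
          _ = ∫ θ, Complex.cos ((r * Real.cos θ : ℝ):ℂ) * g θ ∂μ :=
              integral_congr_ae (Filter.Eventually.of_forall hptwise)
          _ = 0 := hcos0
      have hak := aux_coeff_zero a hasum hkey
      intro k
      have h1 := hak k
      simp only [ha] at h1
      have h2 : m k = 0 := by
        rcases mul_eq_zero.mp h1 with h | h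
        · exact absurd h (by
            apply div_ne_zero
            · exact pow_ne_zero _ (by norm_num)
            · exact_mod_cast (Nat.factorial_pos _).ne')
        · exact h
      rw [intervalIntegral.integral_of_le hpi]
      exact h2
  have hfold : ∀ k : ℕ,
      (∫ θ in (0:ℝ)..(π/2), ((Real.cos θ : ℂ))^(2*k) * (g θ + g (π - θ))) = 0 := by

      intro k
      set f : ℝ → ℂ := fun θ => ((Real.cos θ : ℂ))^(2*k) * g θ with hf
      have hfcont : Continuous f := by fun_prop
      have hfint : ∀ c d : ℝ, IntervalIntegrable f volume c d :=
        fun c d => hfcont.intervalIntegrable c d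
      have hfper : Function.Periodic f π := by
        intro θ
        simp only [hf, Real.cos_add_pi, hper, Complex.ofReal_neg]
        rw [(even_two_mul k).neg_pow]
      have h2 : (∫ θ in (0:ℝ)..π, f θ) + (∫ θ in π..(2*π), f θ) = ∫ θ in (0:ℝ)..(2*π), f θ :=
        intervalIntegral.integral_add_adjacent_intervals (hfint 0 π) (hfint π (2*π))
      have h3 : (∫ θ in π..(2*π), f θ) = ∫ θ in (0:ℝ)..π, f θ := by
        have := hfper.intervalIntegral_add_eq π 0
        rw [zero_add] at this
        rw [show (2:ℝ)*π = π + π by ring, this]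
      have h4 : (∫ θ in (0:ℝ)..π, f θ) = 0 := by
        rw [hmom k] at h2
        rw [h3] at h2
        have : (2:ℂ) * ∫ θ in (0:ℝ)..π, f θ = 0 := by rw [two_mul]; exact h2
        simpa using this
      have h5 : (∫ θ in (0:ℝ)..(π/2), f (π - θ)) = ∫ θ in (π/2)..π, f θ := by
        rw [intervalIntegral.integral_comp_sub_left f π]
        rw [show π - π/2 = π/2 by ring, sub_zero]
      have h6 : (∫ θ in (0:ℝ)..(π/2), f θ) + (∫ θ in (π/2)..π, f θ) = 0 := by
        rw [intervalIntegral.integral_add_adjacent_intervals (hfint 0 (π/2)) (hfint (π/2) π), h4]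
      have h7 : ∀ θ : ℝ, f (π - θ) = ((Real.cos θ : ℂ))^(2*k) * g (π - θ) := by
        intro θ
        simp only [hf, Real.cos_pi_sub, Complex.ofReal_neg]
        rw [(even_two_mul k).neg_pow]
      calc (∫ θ in (0:ℝ)..(π/2), ((Real.cos θ : ℂ))^(2*k) * (g θ + g (π - θ)))
          = (∫ θ in (0:ℝ)..(π/2), f θ + f (π - θ)) := by
            apply intervalIntegral.integral_congr
            intro θ _
            show ((Real.cos θ : ℂ))^(2*k) * (g θ + g (π - θ)) = f θ + f (π - θ)
            rw [h7 θ]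
            simp only [hf]
            ring
        _ = (∫ θ in (0:ℝ)..(π/2), f θ) + ∫ θ in (0:ℝ)..(π/2), f (π - θ) := by
            apply intervalIntegral.integral_add (hfint 0 (π/2))
            apply Continuous.intervalIntegrable
            exact hfcont.comp (by fun_prop)
        _ = 0 := by rw [h5]; exact h6
  -- real and imaginary parts
  set H : ℝ → ℂ := fun θ => g θ + g (π - θ) with hH
  have hHcont : Continuous H := by fun_prop
  have hHik : ∀ k : ℕ,
      IntervalIntegrable (fun θ => ((Real.cos θ : ℂ))^(2*k) * H θ) volume 0 (π/2) := by
    intro k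
    apply Continuous.intervalIntegrable
    fun_prop
  have hre : ∀ k : ℕ, (∫ θ in (0:ℝ)..(π/2), (Real.cos θ)^(2*k) * (H θ).re) = 0 := by
    intro k
    have h2 := Complex.reCLM.intervalIntegral_comp_comm (hHik k)
    rw [hfold k, map_zero] at h2
    refine Eq.trans ?_ h2
    apply intervalIntegral.integral_congr
    intro θ _
    show (Real.cos θ)^(2*k) * (H θ).re = Complex.reCLM (((Real.cos θ : ℂ))^(2*k) * H θ)
    rw [← Complex.ofReal_pow]
    exact (Complex.re_ofReal_mul _ _).symm
  have him : ∀ k : ℕ, (∫ θ in (0:ℝ)..(π/2), (Real.cos θ)^(2*k) * (H θ).im) = 0 := by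
    intro k
    have h2 := Complex.imCLM.intervalIntegral_comp_comm (hHik k)
    rw [hfold k, map_zero] at h2
    refine Eq.trans ?_ h2
    apply intervalIntegral.integral_congr
    intro θ _
    show (Real.cos θ)^(2*k) * (H θ).im = Complex.imCLM (((Real.cos θ : ℂ))^(2*k) * H θ)
    rw [← Complex.ofReal_pow]
    exact (Complex.im_ofReal_mul _ _).symm
  have hu := sw_vanish (fun θ => (H θ).re) (Complex.continuous_re.comp hHcont) hre
  have hv := sw_vanish (fun θ => (H θ).im) (Complex.continuous_im.comp hHcont) him
  intro θ hθ
  have hmem : π/2 - θ ∈ Set.Icc (0:ℝ) (π/2) := ⟨by linarith [hθ.2], by linarith [hθ.1]⟩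
  have hzero : H (π/2 - θ) = 0 := Complex.ext (hu _ hmem) (hv _ hmem)
  have hsum : g (π/2 - θ) + g (π - (π/2 - θ)) = 0 := hzero
  rw [show π - (π/2 - θ) = π/2 + θ by ring] at hsum
  exact eq_neg_of_add_eq_zero_left hsum
end

section
/- Let 0 < a ≤ b and let g : ℝ → ℂ be continuous with support contained in [a,b]. If ∫_a^b g(r) r^{−2j} dr = 0 for every integer j ≥ 1, then g = 0 identically. -/
open MeasureTheory

/-- **Vanishing negative even moments force vanishing.** If `g : ℝ → ℂ` is continuous with
support in `[a,b] ⊂ (0,∞)` and `∫_a^b g(r) r^{−2j} dr = 0` for every integer `j ≥ 1`,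
then `g = 0` identically. -/
theorem vanishing_negative_even_moments
    (a b : ℝ) (ha : 0 < a) (hab : a ≤ b)
    (g : ℝ → ℂ) (hg : Continuous g) (hsupp : ∀ r ∉ Set.Icc a b, g r = 0)
    (hm : ∀ j : ℕ, 1 ≤ j → (∫ r in a..b, g r / (r : ℂ) ^ (2 * j)) = 0) :
    ∀ r : ℝ, g r = 0 := by
  -- notation
  have hne : ∀ r ∈ Set.Icc a b, (r : ℝ) ≠ 0 := fun r hr => (lt_of_lt_of_le ha hr.1).ne'
  -- continuity / integrability of the basic integrands
  have hxcont : ContinuousOn (fun r : ℝ => (((r : ℂ)) ^ 2)⁻¹) (Set.Icc a b) := by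
    apply ContinuousOn.inv₀
    · exact (Complex.continuous_ofReal.continuousOn.pow 2)
    · intro r hr
      exact pow_ne_zero _ (by exact_mod_cast hne r hr)
  have hInt : ∀ q : Polynomial ℂ,
      IntervalIntegrable
        (fun r : ℝ => g r * (((r : ℂ) ^ 2)⁻¹ * q.eval (((r : ℂ) ^ 2)⁻¹))) volume a b := by
    intro q
    apply ContinuousOn.intervalIntegrable
    rw [Set.uIcc_of_le hab]
    exact hg.continuousOn.mul (hxcont.mul ((q.continuous).comp_continuousOn hxcont))
  -- Step 1: the integral of g against x * q(x), x = r⁻², vanishes for every polynomial q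
  have hq : ∀ q : Polynomial ℂ,
      (∫ r in a..b, g r * (((r : ℂ) ^ 2)⁻¹ * q.eval (((r : ℂ) ^ 2)⁻¹))) = 0 := by
    intro q
    induction q using Polynomial.induction_on' with
    | add p s hp hs =>
      simp only [Polynomial.eval_add, mul_add]
      rw [intervalIntegral.integral_add (hInt p) (hInt s), hp, hs, add_zero]
    | monomial n c =>
      have key : ∀ r : ℝ,
          g r * (((r : ℂ) ^ 2)⁻¹ * (Polynomial.monomial n c).eval (((r : ℂ) ^ 2)⁻¹))
            = c * (g r / (r : ℂ) ^ (2 * (n + 1))) := by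
        intro r
        rw [Polynomial.eval_monomial, div_eq_mul_inv, pow_mul, ← inv_pow]
        ring
      simp only [key]
      rw [intervalIntegral.integral_const_mul, hm (n + 1) (by omega), mul_zero]
  -- bound on g
  obtain ⟨M, hM⟩ := isCompact_Icc.exists_bound_of_continuousOn hg.continuousOn
  have hM0 : 0 ≤ M := le_trans (norm_nonneg (g a)) (hM a ⟨le_refl a, hab⟩)
  -- the interval [c, d] for the substituted variable
  set c : ℝ := (b ^ 2)⁻¹ with hc_def
  set d : ℝ := (a ^ 2)⁻¹ with hd_def
  have hb : 0 < b := lt_of_lt_of_le ha hab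
  have hc : 0 < c := by positivity
  have hd : 0 < d := by positivity
  have hsq : a ^ 2 ≤ b ^ 2 := by nlinarith
  have hcd : c ≤ d := by
    rw [hc_def, hd_def]
    gcongr <;> nlinarith
  -- the function to approximate
  set φ : ℝ → ℂ := fun u => (starRingEnd ℂ) (g ((Real.sqrt u)⁻¹)) * ((u : ℂ))⁻¹ with hφ_def
  have hφcont : ContinuousOn φ (Set.Icc c d) := by
    have h1 : ContinuousOn (fun u : ℝ => (Real.sqrt u)⁻¹) (Set.Icc c d) :=
      ContinuousOn.inv₀ Real.continuous_sqrt.continuousOn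
        (fun u hu => (Real.sqrt_pos.mpr (lt_of_lt_of_le hc hu.1)).ne')
    have h2 : ContinuousOn (fun u : ℝ => ((u : ℂ))⁻¹) (Set.Icc c d) :=
      ContinuousOn.inv₀ Complex.continuous_ofReal.continuousOn
        (fun u hu => by
          exact_mod_cast (lt_of_lt_of_le hc hu.1).ne')
    exact ((continuous_star.comp hg).comp_continuousOn h1).mul h2
  -- membership of (r²)⁻¹ in [c,d] and key identity
  have humem : ∀ r ∈ Set.Icc a b, ((r : ℝ) ^ 2)⁻¹ ∈ Set.Icc c d := by
    intro r hr
    have hr0 : 0 < r := lt_of_lt_of_le ha hr.1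
    constructor
    · rw [hc_def]
      gcongr <;> nlinarith [hr.2, hr.1, ha]
    · rw [hd_def]
      gcongr <;> nlinarith [hr.2, hr.1, ha]
  have hr_eq : ∀ r ∈ Set.Icc a b, (Real.sqrt ((r ^ 2)⁻¹))⁻¹ = r := by
    intro r hr
    have hr0 : 0 ≤ r := le_of_lt (lt_of_lt_of_le ha hr.1)
    rw [Real.sqrt_inv, Real.sqrt_sq hr0, inv_inv]
  -- mapping real polynomials to ℂ
  have hevMap : ∀ (p : Polynomial ℝ) (v : ℝ),
      (p.map (algebraMap ℝ ℂ)).eval ((v : ℂ)) = ((p.eval v : ℝ) : ℂ) := by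
    intro p v
    rw [Polynomial.eval_map, show ((v : ℂ)) = algebraMap ℝ ℂ v from rfl,
      Polynomial.eval₂_at_apply]
    rfl
  -- Step 2: ∫ g * conj g = 0
  have hI : (∫ r in a..b, g r * (starRingEnd ℂ) (g r)) = 0 := by
    set I : ℂ := ∫ r in a..b, g r * (starRingEnd ℂ) (g r) with hI_def
    have hIint : IntervalIntegrable (fun r : ℝ => g r * (starRingEnd ℂ) (g r)) volume a b :=
      (hg.mul (continuous_star.comp hg)).intervalIntegrable a b
    have hnorm : ∀ ε > (0 : ℝ), ‖I‖ ≤ 0 + ε := by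
      intro ε hε
      set δ : ℝ := ε / ((M + 1) * d * (|b - a| + 1)) with hδ_def
      have hδ : 0 < δ := by
        apply div_pos hε
        positivity
      obtain ⟨p₁, hp₁⟩ := exists_polynomial_near_of_continuousOn c d (fun u => (φ u).re)
        (Complex.continuous_re.comp_continuousOn hφcont) (δ / 2) (by positivity)
      obtain ⟨p₂, hp₂⟩ := exists_polynomial_near_of_continuousOn c d (fun u => (φ u).im)
        (Complex.continuous_im.comp_continuousOn hφcont) (δ / 2) (by positivity)
      set q : Polynomial ℂ :=
        p₁.map (algebraMap ℝ ℂ) + Polynomial.C Complex.I * p₂.map (algebraMap ℝ ℂ) with hq_def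
      -- pointwise approximation bound
      have hptwise : ∀ r ∈ Set.Icc a b,
          ‖(starRingEnd ℂ) (g r) - ((r : ℂ) ^ 2)⁻¹ * q.eval (((r : ℂ) ^ 2)⁻¹)‖ ≤ d * δ := by
        intro r hr
        set u : ℝ := ((r : ℝ) ^ 2)⁻¹ with hu_def
        have humem' : u ∈ Set.Icc c d := humem r hr
        have hu0 : 0 < u := lt_of_lt_of_le hc humem'.1
        have hx : (((r : ℂ)) ^ 2)⁻¹ = ((u : ℝ) : ℂ) := by
          rw [hu_def]; push_cast; ring
        have hqe : q.eval ((u : ℂ)) = ((p₁.eval u : ℝ) : ℂ) + Complex.I * ((p₂.eval u : ℝ) : ℂ) := by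
          rw [hq_def]
          simp [Polynomial.eval_add, Polynomial.eval_mul, Polynomial.eval_C, hevMap]
        have hφu : φ u * (u : ℂ) = (starRingEnd ℂ) (g r) := by
          simp only [hφ_def]
          rw [hr_eq r hr]
          have hne' : ((u : ℝ) : ℂ) ≠ 0 := by exact_mod_cast hu0.ne'
          field_simp
        have hsplit : (starRingEnd ℂ) (g r) - ((r : ℂ) ^ 2)⁻¹ * q.eval (((r : ℂ) ^ 2)⁻¹)
            = (u : ℂ) * ((((φ u).re - p₁.eval u : ℝ) : ℂ)
              + Complex.I * (((φ u).im - p₂.eval u : ℝ) : ℂ)) := by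
          rw [hx, hqe, ← hφu]
          conv_lhs => rw [← Complex.re_add_im (φ u)]
          push_cast
          ring
        rw [hsplit, norm_mul]
        have h1 : ‖((u : ℝ) : ℂ)‖ ≤ d := by
          rw [Complex.norm_real, Real.norm_eq_abs, abs_of_pos hu0]
          exact humem'.2
        have h2 : ‖(((φ u).re - p₁.eval u : ℝ) : ℂ)
            + Complex.I * (((φ u).im - p₂.eval u : ℝ) : ℂ)‖ ≤ δ := by
          apply le_trans (norm_add_le _ _)
          rw [norm_mul, Complex.norm_I, one_mul, Complex.norm_real, Complex.norm_real,
            Real.norm_eq_abs, Real.norm_eq_abs]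
          have e1 := hp₁ u humem'
          have e2 := hp₂ u humem'
          rw [abs_sub_comm] at e1 e2
          linarith [le_of_lt e1, le_of_lt e2]
        exact mul_le_mul h1 h2 (norm_nonneg _) (le_of_lt hd)
      -- assemble the integral bound
      have hIdiff : I = ∫ r in a..b,
          g r * ((starRingEnd ℂ) (g r) - ((r : ℂ) ^ 2)⁻¹ * q.eval (((r : ℂ) ^ 2)⁻¹)) := by
        have : (fun r : ℝ => g r * ((starRingEnd ℂ) (g r)
            - ((r : ℂ) ^ 2)⁻¹ * q.eval (((r : ℂ) ^ 2)⁻¹)))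
            = fun r : ℝ => g r * (starRingEnd ℂ) (g r)
              - g r * (((r : ℂ) ^ 2)⁻¹ * q.eval (((r : ℂ) ^ 2)⁻¹)) := by
          funext r; ring
        rw [this, intervalIntegral.integral_sub hIint (hInt q), hq q, sub_zero, hI_def]
      have hbound : ‖I‖ ≤ M * (d * δ) * |b - a| := by
        rw [hIdiff]
        apply intervalIntegral.norm_integral_le_of_norm_le_const
        intro r hr
        have hr' : r ∈ Set.Icc a b := by
          rw [Set.uIoc_of_le hab] at hr
          exact ⟨le_of_lt hr.1, hr.2⟩
        rw [norm_mul]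
        exact mul_le_mul (hM r hr') (hptwise r hr') (norm_nonneg _) hM0
      have hδε : δ * ((M + 1) * d * (|b - a| + 1)) = ε := by
        rw [hδ_def]
        field_simp
      have hfinal : M * (d * δ) * |b - a| ≤ ε := by
        rw [← hδε]
        have habs : 0 ≤ |b - a| := abs_nonneg _
        nlinarith [mul_nonneg hδ.le hd.le, hδ.le, hd.le, hM0]
      linarith [le_trans hbound hfinal]
    have : ‖I‖ ≤ 0 := le_of_forall_pos_le_add hnorm
    have : ‖I‖ = 0 := le_antisymm this (norm_nonneg _)
    exact norm_eq_zero.mp this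
  -- Step 3: the real integral of normSq ∘ g vanishes
  have hreal : (∫ r in a..b, Complex.normSq (g r)) = 0 := by
    have h1 : ∀ r : ℝ, g r * (starRingEnd ℂ) (g r) = ((Complex.normSq (g r) : ℝ) : ℂ) :=
      fun r => Complex.mul_conj (g r)
    rw [show (∫ r in a..b, g r * (starRingEnd ℂ) (g r))
        = ∫ r in a..b, ((Complex.normSq (g r) : ℝ) : ℂ) from by simp only [h1]] at hI
    rw [intervalIntegral.integral_ofReal] at hI
    exact_mod_cast hI
  -- Step 4: conclude g = 0
  set F : ℝ → ℝ := fun r => Complex.normSq (g r) with hF_def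
  have hFcont : Continuous F := Complex.continuous_normSq.comp hg
  have hFsupp : ∀ r ∉ Set.Icc a b, F r = 0 := by
    intro r hr
    rw [hF_def]
    simp [hsupp r hr]
  have hFcs : HasCompactSupport F := HasCompactSupport.intro isCompact_Icc hFsupp
  have hFint : Integrable F volume := hFcont.integrable_of_hasCompactSupport hFcs
  have htot : (∫ r, F r) = 0 := by
    rw [← setIntegral_eq_integral_of_forall_compl_eq_zero hFsupp (s := Set.Icc a b)]
    rw [integral_Icc_eq_integral_Ioc]
    rw [← intervalIntegral.integral_of_le hab]
    exact hreal
  have hae : F =ᵐ[volume] 0 := by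
    rw [← integral_eq_zero_iff_of_nonneg (fun r => Complex.normSq_nonneg (g r)) hFint]
    exact htot
  have hFzero : F = 0 := (Continuous.ae_eq_iff_eq volume hFcont continuous_const).mp hae
  intro r
  have : F r = 0 := by rw [hFzero]; rfl
  exact Complex.normSq_eq_zero.mp this
end

section
/- Let 0 < a ≤ b and let g : ℝ → ℂ be continuous with support contained in [a,b]. Suppose there exists a nonempty open interval (c,d) ⊂ (0,∞) such that ∫_a^b g(r) (r² + h²)^{−2} dr = 0 for every h ∈ (c,d). Then g = 0 identically. -/
open MeasureTheory

open intervalIntegral Polynomial in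
private lemma vw_aux_diff (a b : ℝ) (hab : a ≤ b) (g : ℝ → ℂ)
    (n : ℕ) (hn : 1 ≤ n)
    (hne : ∀ (t : ℝ), t ∈ Set.uIoc a b → ∀ x : ℝ, ((t ^ 2 + x ^ 2 : ℝ) : ℂ) ≠ 0) :
    ∀ (t : ℝ), t ∈ Set.uIoc a b → ∀ (x : ℝ),
      HasDerivAt (fun x : ℝ => g t / ((t ^ 2 + x ^ 2 : ℝ) : ℂ) ^ n)
        (g t * (-(2 * x * n : ℂ) / ((t ^ 2 + x ^ 2 : ℝ) : ℂ) ^ (n + 1))) x := by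
  intro t ht x
  have hc : ((t ^ 2 + x ^ 2 : ℝ) : ℂ) ≠ 0 := hne t ht x
  have h1 : HasDerivAt (fun x : ℝ => (t ^ 2 + x ^ 2 : ℝ)) (2 * x) x := by
    simpa using (hasDerivAt_pow 2 x).const_add (t ^ 2)
  have h2 : HasDerivAt (fun x : ℝ => ((t ^ 2 + x ^ 2 : ℝ) : ℂ) ^ n)
      ((n * (t ^ 2 + x ^ 2) ^ (n - 1) * (2 * x) : ℝ) : ℂ) x := by
    have := (h1.pow n).ofReal_comp
    push_cast at this ⊢
    convert this using 1
    ext y; simp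
  have h4 := (hasDerivAt_const x (g t)).div h2 (pow_ne_zero n hc)
  convert h4 using 1
  · rfl
  · rfl
  rw [← mul_div_assoc, div_eq_div_iff (pow_ne_zero _ hc) (pow_ne_zero 2 (pow_ne_zero n hc))]
  have hkey : ((t ^ 2 + x ^ 2 : ℝ) : ℂ) ^ (n - 1) * ((t ^ 2 + x ^ 2 : ℝ) : ℂ) ^ (n + 1)
      = (((t ^ 2 + x ^ 2 : ℝ) : ℂ) ^ n) ^ 2 := by
    rw [← pow_add, ← pow_mul]
    congr 1
    omega
  push_cast at hkey ⊢
  rw [← hkey]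
  ring

open intervalIntegral in
private lemma vw_aux_deriv (a b : ℝ) (ha : 0 < a) (hab : a ≤ b) (g : ℝ → ℂ) (hg : Continuous g)
    (M : ℝ) (hM : ∀ t, ‖g t‖ ≤ M) (n : ℕ) (hn : 1 ≤ n) (x₀ : ℝ) :
    HasDerivAt (fun x : ℝ => ∫ t in a..b, g t / ((t ^ 2 + x ^ 2 : ℝ) : ℂ) ^ n)
      ((-(2 * n * x₀) : ℂ) * ∫ t in a..b, g t / ((t ^ 2 + x₀ ^ 2 : ℝ) : ℂ) ^ (n + 1)) x₀ := by
  have hM0 : 0 ≤ M := le_trans (norm_nonneg _) (hM 0)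
  have hlt : ∀ (t : ℝ), t ∈ Set.uIoc a b → a < t := by
    intro t ht
    rcases ht with ⟨h1, _⟩
    simpa [min_eq_left hab] using h1
  have hpos : ∀ (t : ℝ), t ∈ Set.uIoc a b → ∀ x : ℝ, (0:ℝ) < t ^ 2 + x ^ 2 := by
    intro t ht x
    have h1 := hlt t ht
    nlinarith [sq_nonneg x]
  have hne : ∀ (t : ℝ), t ∈ Set.uIoc a b → ∀ x : ℝ, ((t ^ 2 + x ^ 2 : ℝ) : ℂ) ≠ 0 := by
    intro t ht x
    exact_mod_cast ne_of_gt (hpos t ht x)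
  set F : ℝ → ℝ → ℂ := fun x t => g t / ((t ^ 2 + x ^ 2 : ℝ) : ℂ) ^ n with hF
  set F' : ℝ → ℝ → ℂ := fun x t => g t * (-(2 * x * n : ℂ) / ((t ^ 2 + x ^ 2 : ℝ) : ℂ) ^ (n + 1))
    with hF'
  have hne' : ∀ (x : ℝ) (m : ℕ) (t : ℝ), t ∈ Set.uIcc a b → ((t ^ 2 + x ^ 2 : ℝ) : ℂ) ^ m ≠ 0 := by
    intro x m t ht
    apply pow_ne_zero
    have h1 : a ≤ t := by
      rcases ht with ⟨h1, _⟩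
      simpa [min_eq_left hab] using h1
    have : (0:ℝ) < t ^ 2 + x ^ 2 := by nlinarith [sq_nonneg x]
    exact_mod_cast ne_of_gt this
  have contF : ∀ x : ℝ, ContinuousOn (F x) (Set.uIcc a b) := by
    intro x
    exact hg.continuousOn.div (by fun_prop) (fun t ht => hne' x n t ht)
  have contF' : ContinuousOn (F' x₀) (Set.uIcc a b) := by
    exact hg.continuousOn.mul
      (ContinuousOn.div (by fun_prop) (by fun_prop) (fun t ht => hne' x₀ (n+1) t ht))
  have key := intervalIntegral.hasDerivAt_integral_of_dominated_loc_of_deriv_le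
    (F := F) (F' := F') (x₀ := x₀) (a := a) (b := b) (μ := volume)
    (bound := fun _ => M * (2 * (|x₀| + 1) * n) / (a ^ 2) ^ (n + 1))
    (Metric.ball_mem_nhds x₀ one_pos)
    (Filter.Eventually.of_forall fun x =>
      ((contF x).mono Set.uIoc_subset_uIcc).aestronglyMeasurable measurableSet_uIoc)
    ((contF x₀).intervalIntegrable)
    ((contF'.mono Set.uIoc_subset_uIcc).aestronglyMeasurable measurableSet_uIoc)
    ?_ intervalIntegrable_const
    (Filter.Eventually.of_forall fun t ht x _ => vw_aux_diff a b hab g n hn hne t ht x)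
  · have h2 := key.2
    have heq : (∫ t in a..b, F' x₀ t) = (-(2 * n * x₀) : ℂ) *
        ∫ t in a..b, g t / ((t ^ 2 + x₀ ^ 2 : ℝ) : ℂ) ^ (n + 1) := by
      rw [← intervalIntegral.integral_const_mul]
      apply intervalIntegral.integral_congr
      intro t _
      rw [hF']
      push_cast
      ring
    rwa [heq] at h2
  · refine Filter.Eventually.of_forall fun t ht x hx => ?_
    have h1 := hlt t ht
    have hx' : |x| ≤ |x₀| + 1 := by
      have := abs_sub_abs_le_abs_sub x x₀
      have hd : |x - x₀| < 1 := by simpa [Real.dist_eq] using hx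
      linarith
    have hnorm : ‖F' x t‖ = ‖g t‖ * (2 * |x| * n) / (t ^ 2 + x ^ 2) ^ (n + 1) := by
      rw [hF']
      simp only [norm_mul, norm_div, norm_neg, norm_pow, Complex.norm_real,
        Real.norm_eq_abs, Complex.norm_natCast]
      have h2 : ‖(2 : ℂ)‖ = 2 := by norm_num
      rw [h2, abs_of_pos (hpos t ht x)]
      ring
    rw [hnorm]
    have hden : (a ^ 2) ^ (n + 1) ≤ (t ^ 2 + x ^ 2) ^ (n + 1) := by
      apply pow_le_pow_left₀ (by positivity)
      nlinarith [sq_nonneg x]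
    apply div_le_div₀ (by positivity) _ (by positivity) hden
    calc ‖g t‖ * (2 * |x| * n) ≤ M * (2 * |x| * n) := by
          apply mul_le_mul_of_nonneg_right (hM t) (by positivity)
      _ ≤ M * (2 * (|x₀| + 1) * n) := by
          apply mul_le_mul_of_nonneg_left _ hM0
          have hn0 : (0:ℝ) ≤ (n:ℝ) := by positivity
          nlinarith

open intervalIntegral in
private lemma vw_moments_zero (a b : ℝ) (ha : 0 < a) (hab : a ≤ b) (g : ℝ → ℂ)
    (hg : Continuous g) (M : ℝ) (hM : ∀ t, ‖g t‖ ≤ M)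
    (c d : ℝ) (hc : 0 ≤ c) (hcd : c < d)
    (hm : ∀ h ∈ Set.Ioo c d, (∫ r in a..b, g r / ((r ^ 2 + h ^ 2 : ℝ) : ℂ) ^ 2) = 0) :
    ∀ n : ℕ, 2 ≤ n → ∀ h ∈ Set.Ioo c d,
      (∫ r in a..b, g r / ((r ^ 2 + h ^ 2 : ℝ) : ℂ) ^ n) = 0 := by
  intro n hn
  induction n, hn using Nat.le_induction with
  | base => exact hm
  | succ n hn IH =>
    intro h hh
    have hd := vw_aux_deriv a b ha hab g hg M hM n (by omega) h
    have hev : (fun x : ℝ => ∫ r in a..b, g r / ((r ^ 2 + x ^ 2 : ℝ) : ℂ) ^ n)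
        =ᶠ[nhds h] fun _ => (0 : ℂ) :=
      Filter.eventuallyEq_of_mem (isOpen_Ioo.mem_nhds hh) IH
    have hd0 : HasDerivAt (fun x : ℝ => ∫ r in a..b, g r / ((r ^ 2 + x ^ 2 : ℝ) : ℂ) ^ n)
        0 h := (hasDerivAt_const h (0 : ℂ)).congr_of_eventuallyEq hev
    have huniq := hd.unique hd0
    have hh0 : (0 : ℝ) < h := lt_of_le_of_lt hc hh.1
    have hcoef : (-(2 * n * h) : ℂ) ≠ 0 := by
      simp only [neg_ne_zero]
      refine mul_ne_zero (mul_ne_zero two_ne_zero ?_) ?_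
      · have : n ≠ 0 := by omega
        exact_mod_cast this
      · exact_mod_cast ne_of_gt hh0
    exact (mul_eq_zero.mp huniq).resolve_left hcoef

open intervalIntegral in
private lemma vw_cont_nonneg_zero (a b : ℝ) (hab : a < b) (f : ℝ → ℝ) (hf : Continuous f)
    (h0 : ∀ x, 0 ≤ f x) (hint : (∫ x in a..b, f x) = 0) : ∀ x ∈ Set.Icc a b, f x = 0 := by
  intro r hr
  by_contra hne
  have hpos : 0 < f r := (h0 r).lt_of_ne (Ne.symm hne)
  obtain ⟨δ, hδ, hball⟩ := Metric.continuousAt_iff.mp hf.continuousAt (f r / 2) (by linarith)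
  set s := max a (r - δ) with hs
  set t := min b (r + δ) with ht
  have hst : s < t := by
    rw [hs, ht]
    apply max_lt <;> [skip; skip] <;> apply lt_min <;>
      first
        | linarith [hr.1, hr.2, hδ]
  have has : a ≤ s := le_max_left _ _
  have htb : t ≤ b := min_le_left _ _
  have hfi : ∀ u v : ℝ, IntervalIntegrable f volume u v := fun u v => hf.intervalIntegrable u v
  have hposon : ∀ y ∈ Set.Ioo s t, 0 < f y := by
    intro y hy
    have h1 : r - δ < y := lt_of_le_of_lt (le_max_right a (r - δ)) hy.1
    have h2 : y < r + δ := lt_of_lt_of_le hy.2 (min_le_right b (r + δ))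
    have hdy : dist y r < δ := by rw [Real.dist_eq, abs_lt]; constructor <;> linarith
    have := hball hdy
    rw [Real.dist_eq, abs_lt] at this
    linarith [this.1, this.2]
  have hI : 0 < ∫ x in s..t, f x :=
    intervalIntegral_pos_of_pos_on (hfi s t) hposon hst
  have hsplit : (∫ x in a..b, f x) = (∫ x in a..s, f x) + (∫ x in s..t, f x)
      + (∫ x in t..b, f x) := by
    rw [integral_add_adjacent_intervals (hfi a s) (hfi s t),
      integral_add_adjacent_intervals (hfi a t) (hfi t b)]
  have h1 : 0 ≤ ∫ x in a..s, f x := integral_nonneg has (fun u _ => h0 u)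
  have h2 : 0 ≤ ∫ x in t..b, f x := integral_nonneg htb (fun u _ => h0 u)
  rw [hsplit] at hint
  linarith

open Polynomial in
private lemma vw_sw_approx (a b h₀ : ℝ) (ha : 0 < a) (hh : 0 < h₀) (v : ℝ → ℝ) (hv : Continuous v)
    (ε : ℝ) (hε : 0 < ε) :
    ∃ q : Polynomial ℝ, ∀ t ∈ Set.Icc a b, |v t - q.eval ((t ^ 2 + h₀ ^ 2)⁻¹)| ≤ ε := by
  haveI : CompactSpace (Set.Icc a b) := isCompact_iff_compactSpace.mp isCompact_Icc
  set U : C(Set.Icc a b, ℝ) :=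
    ⟨fun x => ((x : ℝ) ^ 2 + h₀ ^ 2)⁻¹,
      Continuous.inv₀ (by fun_prop) (fun x => by positivity)⟩ with hU
  set A : Subalgebra ℝ C(Set.Icc a b, ℝ) := Algebra.adjoin ℝ {U} with hA
  have hsep : A.SeparatesPoints := by
    intro x y hxy
    refine ⟨U, ⟨U, Algebra.subset_adjoin (Set.mem_singleton U), rfl⟩, ?_⟩
    intro hUeq
    apply hxy
    have h1 : ((x : ℝ) ^ 2 + h₀ ^ 2) = ((y : ℝ) ^ 2 + h₀ ^ 2) :=
      inv_injective (hUeq : ((x : ℝ) ^ 2 + h₀ ^ 2)⁻¹ = ((y : ℝ) ^ 2 + h₀ ^ 2)⁻¹)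
    have hx : a ≤ (x : ℝ) := x.2.1
    have hy : a ≤ (y : ℝ) := y.2.1
    have h2 : ((x : ℝ) - y) * ((x : ℝ) + y) = 0 := by nlinarith
    rcases mul_eq_zero.mp h2 with h3 | h3
    · exact Subtype.ext (by linarith)
    · exfalso; nlinarith
  have htop := ContinuousMap.subalgebra_topologicalClosure_eq_top_of_separatesPoints A hsep
  set V : C(Set.Icc a b, ℝ) := ⟨fun x => v x, by fun_prop⟩ with hV
  have hVmem : V ∈ A.topologicalClosure := htop.symm ▸ Algebra.mem_top
  have hVcl : V ∈ closure (A : Set C(Set.Icc a b, ℝ)) := hVmem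
  obtain ⟨p, hpA, hdist⟩ := Metric.mem_closure_iff.mp hVcl ε hε
  rw [hA, Algebra.adjoin_singleton_eq_range_aeval] at hpA
  obtain ⟨q, hq⟩ := hpA
  refine ⟨q, fun t htK => ?_⟩
  have hd := ContinuousMap.dist_apply_le_dist (f := V) (g := p) ⟨t, htK⟩
  have hle : dist (V ⟨t, htK⟩) (p ⟨t, htK⟩) ≤ ε := le_trans hd (le_of_lt hdist)
  rw [← hq] at hle
  simp only [AlgHom.toRingHom_eq_coe, RingHom.coe_coe, Polynomial.aeval_continuousMap_apply] at hle
  simpa [Real.dist_eq, hV, hU] using hle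

/-- **Vanishing of the weighted integrals on an interval of parameters forces vanishing.**
If `g : ℝ → ℂ` is continuous with support in `[a,b] ⊂ (0,∞)` and there is a nonempty open
interval `(c,d) ⊂ (0,∞)` such that `∫_a^b g(r) (r² + h²)^{−2} dr = 0` for every
`h ∈ (c,d)`, then `g = 0` identically. -/
theorem vanishing_weighted_integrals_on_interval
    (a b : ℝ) (ha : 0 < a) (hab : a ≤ b)
    (g : ℝ → ℂ) (hg : Continuous g) (hsupp : ∀ r ∉ Set.Icc a b, g r = 0)
    (c d : ℝ) (hc : 0 ≤ c) (hcd : c < d)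
    (hm : ∀ h ∈ Set.Ioo c d, (∫ r in a..b, g r / ((r ^ 2 + h ^ 2 : ℝ) : ℂ) ^ 2) = 0) :
    ∀ r : ℝ, g r = 0 := by
  obtain ⟨M₀, hM₀⟩ := isCompact_Icc.exists_bound_of_continuousOn hg.continuousOn
  set M := max M₀ 0 with hMdef
  have hM : ∀ t, ‖g t‖ ≤ M := by
    intro t
    by_cases ht : t ∈ Set.Icc a b
    · exact le_trans (hM₀ t ht) (le_max_left _ _)
    · rw [hsupp t ht]; simp [hMdef]
  have hM0 : 0 ≤ M := le_max_right _ _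
  rcases eq_or_lt_of_le hab with heq | hlt
  · -- degenerate case a = b
    subst heq
    have hgeq : g = fun _ => (0 : ℂ) := by
      apply hg.ext_on (dense_compl_singleton a) continuous_const
      intro x hx
      apply hsupp
      rw [Set.Icc_self]
      exact hx
    intro r
    rw [hgeq]
  -- main case a < b
  set h₀ := (c + d) / 2 with hh₀def
  have hh₀mem : h₀ ∈ Set.Ioo c d := ⟨by rw [hh₀def]; linarith, by rw [hh₀def]; linarith⟩
  have hh₀ : 0 < h₀ := lt_of_le_of_lt hc hh₀mem.1
  set u : ℝ → ℝ := fun t => (t ^ 2 + h₀ ^ 2)⁻¹ with hu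
  have hu_cont : Continuous u := Continuous.inv₀ (by fun_prop) (fun t => by positivity)
  have hu_pos : ∀ t, 0 < u t := fun t => by rw [hu]; positivity
  have hu_le : ∀ t, u t ≤ (h₀ ^ 2)⁻¹ := by
    intro t
    rw [hu]
    apply inv_anti₀ (by positivity)
    nlinarith [sq_nonneg t]
  have moments := vw_moments_zero a b ha hab g hg M hM c d hc hcd hm
  have moments' : ∀ k : ℕ, (∫ t in a..b, g t * ((u t : ℝ) : ℂ) ^ (k + 2)) = 0 := by
    intro k
    rw [← moments (k + 2) (by omega) h₀ hh₀mem]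
    apply intervalIntegral.integral_congr
    intro t _
    simp only [hu]
    push_cast
    rw [inv_pow, div_eq_mul_inv]
  have polymom : ∀ q : Polynomial ℝ,
      (∫ t in a..b, g t * ((u t : ℝ) : ℂ) ^ 2 * ((q.eval (u t) : ℝ) : ℂ)) = 0 := by
    intro q
    have hexp : ∀ t : ℝ, (g t * ((u t : ℝ) : ℂ) ^ 2 * ((q.eval (u t) : ℝ) : ℂ))
        = ∑ i ∈ Finset.range (q.natDegree + 1),
            ((q.coeff i : ℝ) : ℂ) * (g t * ((u t : ℝ) : ℂ) ^ (i + 2)) := by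
      intro t
      rw [Polynomial.eval_eq_sum_range]
      push_cast
      rw [Finset.mul_sum]
      apply Finset.sum_congr rfl
      intro i _
      ring
    rw [intervalIntegral.integral_congr (fun t _ => hexp t)]
    rw [intervalIntegral.integral_finset_sum]
    · apply Finset.sum_eq_zero
      intro i _
      rw [intervalIntegral.integral_const_mul, moments' i, mul_zero]
    · intro i _
      apply Continuous.intervalIntegrable
      fun_prop
  set w : ℝ → ℂ := fun t => g t * ((u t : ℝ) : ℂ) ^ 2 with hw
  have hw_cont : Continuous w := by fun_prop
  set v₁ : ℝ → ℝ := fun t => (g t).re * (u t) ^ 2 with hv₁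
  set v₂ : ℝ → ℝ := fun t => (g t).im * (u t) ^ 2 with hv₂
  have hv₁c : Continuous v₁ := by fun_prop
  have hv₂c : Continuous v₂ := by fun_prop
  have hconj : ∀ t, (starRingEnd ℂ) (w t) = ((v₁ t : ℝ) : ℂ) - Complex.I * ((v₂ t : ℝ) : ℂ) := by
    intro t
    rw [hw]
    simp only [hv₁, hv₂]
    apply Complex.ext <;>
      simp [Complex.mul_re, Complex.mul_im, Complex.conj_re, Complex.conj_im] <;> ring
  set C : ℝ := M * ((h₀ ^ 2)⁻¹) ^ 2 with hC
  have hC0 : 0 ≤ C := by positivity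
  have hwbound : ∀ t, ‖w t‖ ≤ C := by
    intro t
    rw [hw, norm_mul, norm_pow, Complex.norm_real, Real.norm_eq_abs,
      abs_of_pos (hu_pos t), hC]
    apply mul_le_mul (hM t) _ (by positivity) hM0
    apply pow_le_pow_left₀ (le_of_lt (hu_pos t)) (hu_le t)
  -- the inner product vanishes
  have hZ : (∫ t in a..b, w t * (starRingEnd ℂ) (w t)) = 0 := by
    have hbound : ∀ ε : ℝ, 0 < ε → ‖∫ t in a..b, w t * (starRingEnd ℂ) (w t)‖ ≤ ε := by
      intro ε hε
      set ε' := ε / (2 * C * (b - a) + 1) with hε'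
      have hden : (0:ℝ) < 2 * C * (b - a) + 1 := by nlinarith
      have hε'0 : 0 < ε' := by rw [hε']; positivity
      obtain ⟨q₁, hq₁⟩ := vw_sw_approx a b h₀ ha hh₀ v₁ hv₁c ε' hε'0
      obtain ⟨q₂, hq₂⟩ := vw_sw_approx a b h₀ ha hh₀ v₂ hv₂c ε' hε'0
      set p : ℝ → ℂ := fun t => ((q₁.eval (u t) : ℝ) : ℂ) - Complex.I * ((q₂.eval (u t) : ℝ) : ℂ)
        with hp
      have hp_cont : Continuous p := by fun_prop
      have hwp : (∫ t in a..b, w t * p t) = 0 := by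
        have : ∀ t : ℝ, w t * p t = w t * ((q₁.eval (u t) : ℝ) : ℂ)
            - Complex.I * (w t * ((q₂.eval (u t) : ℝ) : ℂ)) := by
          intro t; rw [hp]; ring
        rw [intervalIntegral.integral_congr (fun t _ => this t)]
        rw [intervalIntegral.integral_sub (by apply Continuous.intervalIntegrable; fun_prop)
          (by apply Continuous.intervalIntegrable; fun_prop)]
        rw [intervalIntegral.integral_const_mul]
        rw [polymom q₁, polymom q₂]
        simp
      have hint1 : IntervalIntegrable (fun t => w t * (starRingEnd ℂ) (w t)) volume a b := by
        apply Continuous.intervalIntegrable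
        exact hw_cont.mul (continuous_star.comp hw_cont)
      have hint2 : IntervalIntegrable (fun t => w t * p t) volume a b := by
        apply Continuous.intervalIntegrable
        exact hw_cont.mul hp_cont
      have hsplit : (∫ t in a..b, w t * (starRingEnd ℂ) (w t))
          = ∫ t in a..b, w t * ((starRingEnd ℂ) (w t) - p t) := by
        rw [← sub_zero (∫ t in a..b, w t * (starRingEnd ℂ) (w t)), ← hwp,
          ← intervalIntegral.integral_sub hint1 hint2]
        apply intervalIntegral.integral_congr
        intro t _
        ring
      rw [hsplit]
      have hptw : ∀ t ∈ Set.uIoc a b, ‖w t * ((starRingEnd ℂ) (w t) - p t)‖ ≤ C * (2 * ε') := by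
        intro t ht
        have htIcc : t ∈ Set.Icc a b := by
          rw [Set.uIoc_of_le hab] at ht
          exact ⟨le_of_lt ht.1, ht.2⟩
        rw [norm_mul]
        apply mul_le_mul (hwbound t) _ (norm_nonneg _) hC0
        have : (starRingEnd ℂ) (w t) - p t
            = (((v₁ t - q₁.eval (u t) : ℝ)) : ℂ)
              - Complex.I * (((v₂ t - q₂.eval (u t) : ℝ)) : ℂ) := by
          rw [hconj t, hp]
          push_cast
          ring
        rw [this]
        calc ‖(((v₁ t - q₁.eval (u t) : ℝ)) : ℂ)
              - Complex.I * (((v₂ t - q₂.eval (u t) : ℝ)) : ℂ)‖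
            ≤ ‖(((v₁ t - q₁.eval (u t) : ℝ)) : ℂ)‖
              + ‖Complex.I * (((v₂ t - q₂.eval (u t) : ℝ)) : ℂ)‖ := norm_sub_le _ _
          _ ≤ ε' + ε' := by
              apply add_le_add
              · rw [Complex.norm_real, Real.norm_eq_abs]
                exact hq₁ t htIcc
              · rw [norm_mul, Complex.norm_I, one_mul, Complex.norm_real, Real.norm_eq_abs]
                exact hq₂ t htIcc
          _ = 2 * ε' := by ring
      have := intervalIntegral.norm_integral_le_of_norm_le_const hptw
      have habs : |b - a| = b - a := abs_of_pos (by linarith)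
      rw [habs] at this
      apply le_trans this
      have h2 : ε' * (2 * C * (b - a) + 1) = ε := by
        rw [hε']
        exact div_mul_cancel₀ ε (ne_of_gt hden)
      nlinarith [hε'0.le, hC0, h2]
    have h0 : ‖∫ t in a..b, w t * (starRingEnd ℂ) (w t)‖ ≤ 0 := by
      by_contra hlt'
      push_neg at hlt'
      have := hbound (‖∫ t in a..b, w t * (starRingEnd ℂ) (w t)‖ / 2) (by linarith)
      linarith
    simpa using norm_le_zero_iff.mp h0
  -- convert to a real statement
  have hZ' : (∫ t in a..b, Complex.normSq (w t)) = 0 := by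
    have : (∫ t in a..b, ((Complex.normSq (w t) : ℝ) : ℂ)) = 0 := by
      rw [← hZ]
      apply intervalIntegral.integral_congr
      intro t _
      simp only []
      rw [Complex.mul_conj]
    rwa [intervalIntegral.integral_ofReal, Complex.ofReal_eq_zero] at this
  have hwzero : ∀ t ∈ Set.Icc a b, Complex.normSq (w t) = 0 := by
    apply vw_cont_nonneg_zero a b hlt _ (Complex.continuous_normSq.comp hw_cont) (fun t => Complex.normSq_nonneg _) hZ'
  intro r
  by_cases hr : r ∈ Set.Icc a b
  · have hwr : w r = 0 := Complex.normSq_eq_zero.mp (hwzero r hr)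
    rw [hw] at hwr
    rcases mul_eq_zero.mp hwr with h | h
    · exact h
    · exfalso
      have : ((u r : ℝ) : ℂ) ≠ 0 := by
        exact_mod_cast ne_of_gt (hu_pos r)
      exact pow_ne_zero 2 this h
  · exact hsupp r hr
end

section
/- Let c ∈ ℂ with c ∉ (−∞, 0] (i.e. c is not a nonpositive real number). Then the function t ↦ (t² + c)^{−1} is integrable on ℝ and ∫_ℝ (t² + c)^{−1} dt = π/√c, where √c denotes the principal branch of the square root (the one with positive real part). -/
open MeasureTheory Complex Filter Topology

private lemma integral_inv_sq_add_const_aux (c : ℂ) (hcslit : c ∈ Complex.slitPlane) :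
    ∃ ε : ℝ, 0 < ε ∧ ∀ t : ℝ, ε * (1 + t ^ 2) ≤ ‖(t : ℂ) ^ 2 + c‖ := by
  have hre : ∀ t : ℝ, ((t : ℂ) ^ 2 + c).re = t ^ 2 + c.re := by
    intro t; simp [← Complex.ofReal_pow]
  have him : ∀ t : ℝ, ((t : ℂ) ^ 2 + c).im = c.im := by
    intro t; simp [← Complex.ofReal_pow]
  rcases Complex.mem_slitPlane_iff.mp hcslit with hcre | hcim
  · refine ⟨min 1 c.re, by positivity, fun t => ?_⟩
    have h1 := Complex.re_le_norm ((t : ℂ) ^ 2 + c)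
    rw [hre t] at h1
    have hm1 : min 1 c.re ≤ 1 := min_le_left _ _
    have hm2 : min 1 c.re ≤ c.re := min_le_right _ _
    nlinarith [sq_nonneg t]
  · have hci : 0 < |c.im| := abs_pos.mpr hcim
    refine ⟨min (|c.im| / (2 + 2 * |c.re|)) (1 / 2), by positivity, fun t => ?_⟩
    have habs1 := Complex.abs_im_le_norm ((t : ℂ) ^ 2 + c)
    have habs2 := Complex.re_le_norm ((t : ℂ) ^ 2 + c)
    rw [hre t] at habs2
    rw [him t] at habs1
    rcases le_or_gt (t ^ 2) (1 + 2 * |c.re|) with h | h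
    · have key : |c.im| / (2 + 2 * |c.re|) * (1 + t ^ 2) ≤ |c.im| := by
        rw [div_mul_eq_mul_div, div_le_iff₀ (by positivity)]
        have h' : (1 + t ^ 2) ≤ 2 + 2 * |c.re| := by linarith
        exact mul_le_mul_of_nonneg_left h' (abs_nonneg c.im)
      have h1 : min (|c.im| / (2 + 2 * |c.re|)) (1 / 2) * (1 + t ^ 2)
          ≤ |c.im| / (2 + 2 * |c.re|) * (1 + t ^ 2) :=
        mul_le_mul_of_nonneg_right (min_le_left _ _) (by positivity)
      linarith
    · have hkey : (1 / 2 : ℝ) * (1 + t ^ 2) ≤ t ^ 2 + c.re := by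
        have := neg_abs_le c.re
        nlinarith
      have h1 : min (|c.im| / (2 + 2 * |c.re|)) (1 / 2) * (1 + t ^ 2)
          ≤ (1 / 2 : ℝ) * (1 + t ^ 2) :=
        mul_le_mul_of_nonneg_right (min_le_right _ _) (by positivity)
      linarith

/-- **Evaluation of `∫_ℝ (t² + c)^{−1} dt` for complex `c` off the negative real axis.**
If `c ∈ ℂ` is not a nonpositive real number, then `t ↦ (t² + c)^{−1}` is integrable on `ℝ`
and `∫_ℝ (t² + c)^{−1} dt = π / √c`, where `√c = c^{1/2}` is the principal square root
(the one with positive real part). -/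
theorem integral_inv_sq_add_const
    (c : ℂ) (hc : ∀ x : ℝ, x ≤ 0 → c ≠ (x : ℂ)) :
    Integrable (fun t : ℝ => ((t : ℂ) ^ 2 + c)⁻¹) ∧
      (∫ t : ℝ, ((t : ℂ) ^ 2 + c)⁻¹) = (Real.pi : ℂ) / c ^ ((1 : ℂ) / 2) := by
  have hc0 : c ≠ 0 := fun h => hc 0 le_rfl (by simpa using h)
  have hcslit : c ∈ Complex.slitPlane := by
    rw [Complex.mem_slitPlane_iff]
    by_contra h
    push_neg at h
    exact hc c.re h.1 (Complex.ext (by simp) (by simp [h.2]))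
  set a : ℂ := c ^ ((1 : ℂ) / 2) with ha_def
  have ha2 : a ^ 2 = c := by
    have := Complex.cpow_nat_inv_pow c (n := 2) (by norm_num)
    rw [ha_def, show (1:ℂ)/2 = ((2:ℕ):ℂ)⁻¹ by norm_num]
    exact this
  have hare : 0 < a.re := by
    rw [ha_def, Complex.cpow_def_of_ne_zero hc0, Complex.exp_re]
    have him : (Complex.log c * ((1:ℂ)/2)).im = c.arg / 2 := by
      simp [Complex.mul_im, Complex.log_im, Complex.log_re]
      ring
    rw [him]
    have h1 : -Real.pi < c.arg := Complex.neg_pi_lt_arg c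
    have h2 : c.arg < Real.pi :=
      lt_of_le_of_ne (Complex.arg_le_pi c) (Complex.slitPlane_arg_ne_pi hcslit)
    have hpi : 0 < Real.pi := Real.pi_pos
    have : 0 < Real.cos (c.arg / 2) :=
      Real.cos_pos_of_mem_Ioo ⟨by linarith, by linarith⟩
    positivity
  have ha0 : a ≠ 0 := by
    intro h
    apply hc0
    rw [← ha2, h]; ring
  have ht2c : ∀ t : ℝ, ((t : ℂ) ^ 2 + c) ≠ 0 := by
    intro t h
    refine hc (-t ^ 2) (neg_nonpos.mpr (sq_nonneg t)) ?_
    push_cast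
    linear_combination h
  -- basic facts about `I * a ± t`
  have him1 : ∀ t : ℝ, (Complex.I * a + (t : ℂ)).im = a.re := by
    intro t; simp
  have him2 : ∀ t : ℝ, (Complex.I * a - (t : ℂ)).im = a.re := by
    intro t; simp
  have hslit1 : ∀ t : ℝ, Complex.I * a + (t : ℂ) ∈ Complex.slitPlane := fun t =>
    Complex.mem_slitPlane_iff.mpr (Or.inr (by rw [him1 t]; exact hare.ne'))
  have hslit2 : ∀ t : ℝ, Complex.I * a - (t : ℂ) ∈ Complex.slitPlane := fun t =>
    Complex.mem_slitPlane_iff.mpr (Or.inr (by rw [him2 t]; exact hare.ne'))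
  have hne1 : ∀ t : ℝ, Complex.I * a + (t : ℂ) ≠ 0 := fun t h => by
    have := him1 t; rw [h] at this; simp at this; exact hare.ne' this.symm
  have hne2 : ∀ t : ℝ, Complex.I * a - (t : ℂ) ≠ 0 := fun t h => by
    have := him2 t; rw [h] at this; simp at this; exact hare.ne' this.symm
  -- the antiderivative
  set g : ℝ → ℂ := fun t =>
    Complex.I / (2 * a) * (Complex.log (Complex.I * a + t) - Complex.log (Complex.I * a - t))
    with hg_def
  have hg : ∀ t : ℝ, HasDerivAt g (((t : ℂ) ^ 2 + c)⁻¹) t := by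
    intro t
    have h1 : HasDerivAt (fun z : ℂ => Complex.log (Complex.I * a + z))
        (Complex.I * a + (t : ℂ))⁻¹ (t : ℂ) :=
      HasDerivAt.comp_const_add (Complex.I * a) (t : ℂ) (Complex.hasDerivAt_log (hslit1 t))
    have h2 : HasDerivAt (fun z : ℂ => Complex.log (Complex.I * a - z))
        (-(Complex.I * a - (t : ℂ))⁻¹) (t : ℂ) :=
      HasDerivAt.comp_const_sub (Complex.I * a) (t : ℂ) (Complex.hasDerivAt_log (hslit2 t))
    have hD := (((h1.sub h2).const_mul (Complex.I / (2 * a)))).comp_ofReal (z := t)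
    convert hD using 1
    · rfl
    have e1 := hne1 t
    have e2 := hne2 t
    have e3 := ht2c t
    field_simp
    linear_combination (2*a^3 - 2*a*(t:ℂ)^2 - 2*a*c) * Complex.I_sq + (-2*a) * ha2
  -- log of a negative of an upper-half-plane point
  have hlog_neg : ∀ z : ℂ, 0 < z.im →
      Complex.log z = Complex.log (-z) + Real.pi * Complex.I := by
    intro z hz
    apply Complex.ext
    · simp [Complex.log_re, map_neg_eq_map]
    · simp [Complex.log_im, Complex.arg_neg_eq_arg_sub_pi_of_im_pos hz]
  -- rewrite `g t` for positive `t`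
  have hgt : ∀ t : ℝ, 0 < t → g t = Complex.I / (2 * a) *
      (Complex.log (1 + Complex.I * a / t) - Complex.log (1 - Complex.I * a / t)
        - Real.pi * Complex.I) := by
    intro t ht
    have htne : (t : ℂ) ≠ 0 := by exact_mod_cast ht.ne'
    have hw1 : (1 + Complex.I * a / (t : ℂ)) ≠ 0 := by
      intro h
      have h' : (1 + Complex.I * a / (t : ℂ)).im = 0 := by rw [h]; simp
      simp [Complex.div_ofReal_im] at h'
      rcases h' with h' | h'
      · exact hare.ne' h'
      · exact ht.ne' h'
    have hw2 : (1 - Complex.I * a / (t : ℂ)) ≠ 0 := by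
      intro h
      have h' : (1 - Complex.I * a / (t : ℂ)).im = 0 := by rw [h]; simp
      simp [Complex.div_ofReal_im, sub_eq_zero] at h'
      rcases h' with h' | h'
      · exact hare.ne' h'
      · exact ht.ne' h'
    have key1 : Complex.I * a + (t : ℂ) = (t : ℂ) * (1 + Complex.I * a / t) := by
      field_simp; ring
    have key2 : -(Complex.I * a - (t : ℂ)) = (t : ℂ) * (1 - Complex.I * a / t) := by
      field_simp
      ring
    have hlz := hlog_neg (Complex.I * a - (t : ℂ)) (by rw [him2 t]; exact hare)
    rw [hg_def]
    simp only
    rw [hlz, key2, key1, Complex.log_ofReal_mul ht hw1, Complex.log_ofReal_mul ht hw2]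
    ring
  -- limit at +infinity
  have hsmall : Tendsto (fun t : ℝ => Complex.I * a / (t : ℂ)) atTop (𝓝 0) := by
    have h0 : Tendsto (fun t : ℝ => (t : ℝ)⁻¹) atTop (𝓝 0) := tendsto_inv_atTop_zero
    have h2 := (Complex.continuous_ofReal.tendsto 0).comp h0
    have h3 : Tendsto (fun t : ℝ => ((t : ℂ))⁻¹) atTop (𝓝 0) := by
      simpa [Function.comp_def, Complex.ofReal_inv] using h2
    have h4 := h3.const_mul (Complex.I * a)
    simpa [mul_div_assoc, div_eq_mul_inv] using h4
  have hlog1 : ContinuousAt Complex.log 1 :=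
    continuousAt_clog (by simp [Complex.mem_slitPlane_iff])
  have hT1 : Tendsto (fun t : ℝ => Complex.log (1 + Complex.I * a / t)) atTop (𝓝 0) := by
    have h : Tendsto (fun t : ℝ => 1 + Complex.I * a / (t : ℂ)) atTop (𝓝 1) := by
      simpa using tendsto_const_nhds.add hsmall
    simpa [Complex.log_one, Function.comp_def] using hlog1.tendsto.comp h
  have hT2 : Tendsto (fun t : ℝ => Complex.log (1 - Complex.I * a / t)) atTop (𝓝 0) := by
    have h : Tendsto (fun t : ℝ => 1 - Complex.I * a / (t : ℂ)) atTop (𝓝 1) := by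
      simpa using tendsto_const_nhds.sub hsmall
    simpa [Complex.log_one, Function.comp_def] using hlog1.tendsto.comp h
  have hTop : Tendsto g atTop (𝓝 ((Real.pi : ℂ) / (2 * a))) := by
    have key : Tendsto (fun t : ℝ => Complex.I / (2 * a) *
        (Complex.log (1 + Complex.I * a / t) - Complex.log (1 - Complex.I * a / t)
          - Real.pi * Complex.I)) atTop
        (𝓝 (Complex.I / (2 * a) * (0 - 0 - Real.pi * Complex.I))) :=
      ((hT1.sub hT2).sub tendsto_const_nhds).const_mul _
    have heq : Complex.I / (2 * a) * (0 - 0 - Real.pi * Complex.I)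
        = (Real.pi : ℂ) / (2 * a) := by
      rw [div_mul_eq_mul_div]
      congr 1
      linear_combination (-(Real.pi : ℂ)) * Complex.I_sq
    rw [← heq]
    apply key.congr'
    filter_upwards [eventually_gt_atTop (0 : ℝ)] with t ht
    exact (hgt t ht).symm
  -- limit at -infinity, by oddness
  have hodd : ∀ t : ℝ, g (-t) = -g t := by
    intro t
    simp only [hg_def, Complex.ofReal_neg]
    rw [show Complex.I * a + -(t : ℂ) = Complex.I * a - t by ring,
      show Complex.I * a - -(t : ℂ) = Complex.I * a + t by ring]
    ring
  have hBot : Tendsto g atBot (𝓝 (-((Real.pi : ℂ) / (2 * a)))) := by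
    have h := (hTop.comp tendsto_neg_atBot_atTop).neg
    refine h.congr fun t => ?_
    simp only [Function.comp_apply]
    rw [hodd t]; ring
  -- integrability
  have hcont : Continuous fun t : ℝ => ((t : ℂ) ^ 2 + c)⁻¹ := by
    refine Continuous.inv₀ ?_ ht2c
    continuity
  obtain ⟨ε, hε, hbound⟩ := integral_inv_sq_add_const_aux c hcslit
  have hint : Integrable (fun t : ℝ => ((t : ℂ) ^ 2 + c)⁻¹) := by
    refine (integrable_inv_one_add_sq.const_mul ε⁻¹).mono' hcont.aestronglyMeasurable ?_
    refine Filter.Eventually.of_forall fun t => ?_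
    have h0 : (0 : ℝ) < 1 + t ^ 2 := by positivity
    rw [norm_inv]
    calc (‖(t : ℂ) ^ 2 + c‖)⁻¹ ≤ (ε * (1 + t ^ 2))⁻¹ := by
          apply inv_anti₀ (by positivity) (hbound t)
      _ = ε⁻¹ * (1 + t ^ 2)⁻¹ := by rw [mul_inv]
  refine ⟨hint, ?_⟩
  have h2 : (∫ t in Set.Iic (0 : ℝ), ((t : ℂ) ^ 2 + c)⁻¹)
      = g 0 - -((Real.pi : ℂ) / (2 * a)) :=
    integral_Iic_of_hasDerivAt_of_tendsto (hg 0).continuousAt.continuousWithinAt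
      (fun x _ => hg x) hint.integrableOn hBot
  have h3 : (∫ t in Set.Ioi (0 : ℝ), ((t : ℂ) ^ 2 + c)⁻¹)
      = (Real.pi : ℂ) / (2 * a) - g 0 :=
    integral_Ioi_of_hasDerivAt_of_tendsto' (fun x _ => hg x) hint.integrableOn hTop
  rw [← intervalIntegral.integral_Iic_add_Ioi (b := (0 : ℝ)) hint.integrableOn hint.integrableOn, h2, h3]
  have hg0 : g 0 = 0 := by simp [hg_def]
  rw [hg0]
  ring
end

section
/- Let b > 0. Then lim_{ε→0⁺} ∫_ℝ (t² − b² − iε)^{−1} dt = iπ/b; that is, for every ε > 0 the function t ↦ (t² − b² − iε)^{−1} is integrable on ℝ and the value of the integral converges to iπ/b as ε tends to 0 from above. -/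
open MeasureTheory Filter
open Complex Topology


lemma denom_ne_zero {w : ℂ} (him : w.im ≠ 0) (t : ℝ) :
    (t : ℂ) ^ 2 - w ^ 2 ≠ 0 := by
  have h1 : (t : ℂ) - w ≠ 0 := by
    intro h
    apply him
    have := congrArg Complex.im h
    simpa using this.symm
  have h2 : (t : ℂ) + w ≠ 0 := by
    intro h
    apply him
    have := congrArg Complex.im h
    simpa using this
  have : (t : ℂ) ^ 2 - w ^ 2 = ((t : ℂ) - w) * ((t : ℂ) + w) := by ring
  rw [this]
  exact mul_ne_zero h1 h2

lemma integrable_aux {w : ℂ} (hre : 0 < w.re) (him : 0 < w.im) :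
    Integrable (fun t : ℝ => ((t : ℂ) ^ 2 - w ^ 2)⁻¹) := by
  have him' : w.im ≠ 0 := him.ne'
  set δ : ℝ := 2 * w.re * w.im with hδ
  have hδpos : 0 < δ := by positivity
  set M : ℝ := max 1 (2 * ‖w‖ ^ 2) with hM
  have hM1 : (1 : ℝ) ≤ M := le_max_left _ _
  have hMw : 2 * ‖w‖ ^ 2 ≤ M := le_max_right _ _
  set c : ℝ := min (4 : ℝ)⁻¹ (δ / (1 + M)) with hc
  have hcpos : 0 < c := by
    apply lt_min (by norm_num)
    positivity
  have key : ∀ t : ℝ, c * (1 + t ^ 2) ≤ ‖((t : ℂ) ^ 2 - w ^ 2)‖ := by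
    intro t
    rcases le_total (t ^ 2) M with h | h
    · have habs : δ ≤ ‖((t : ℂ) ^ 2 - w ^ 2)‖ := by
        have := Complex.abs_im_le_norm ((t : ℂ) ^ 2 - w ^ 2)
        have him2 : ((t : ℂ) ^ 2 - w ^ 2).im = -δ := by
          simp [Complex.sub_im, Complex.sq_norm, pow_two, Complex.mul_im, hδ]
          ring
        rw [him2] at this
        rw [abs_neg, abs_of_pos hδpos] at this
        exact this
      have hc2 : c ≤ δ / (1 + M) := min_le_right _ _
      have : c * (1 + t ^ 2) ≤ (δ / (1 + M)) * (1 + M) := by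
        apply mul_le_mul hc2 (by linarith) (by positivity) (by positivity)
      rw [div_mul_cancel₀] at this
      · linarith
      · positivity
    · have habs : t ^ 2 / 2 ≤ ‖((t : ℂ) ^ 2 - w ^ 2)‖ := by
        have h1 : ‖((t : ℂ) ^ 2)‖ - ‖(w ^ 2)‖ ≤
            ‖((t : ℂ) ^ 2 - w ^ 2)‖ := by
          exact le_trans (le_abs_self _) (abs_norm_sub_norm_le _ _)
        have h2 : ‖((t : ℂ) ^ 2)‖ = t ^ 2 := by
          rw [norm_pow]
          simp [sq_abs]
        have h3 : ‖(w ^ 2)‖ = ‖w‖ ^ 2 := norm_pow _ _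
        nlinarith
      have hc1 : c ≤ (4 : ℝ)⁻¹ := min_le_left _ _
      nlinarith [sq_nonneg t]
  have hcont : Continuous (fun t : ℝ => ((t : ℂ) ^ 2 - w ^ 2)⁻¹) := by
    apply Continuous.inv₀
    · continuity
    · exact fun t => denom_ne_zero him' t
  apply Integrable.mono' ((integrable_inv_one_add_sq).const_mul c⁻¹)
    hcont.aestronglyMeasurable
  filter_upwards with t
  rw [norm_inv]
  have h1 : 0 < ‖((t : ℂ) ^ 2 - w ^ 2)‖ :=
    norm_pos_iff.mpr (denom_ne_zero him' t)
  have h2 : 0 < 1 + t ^ 2 := by positivity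
  calc (‖((t : ℂ) ^ 2 - w ^ 2)‖)⁻¹ ≤ (c * (1 + t ^ 2))⁻¹ :=
        inv_anti₀ (by positivity) (key t)
    _ = c⁻¹ * (1 + t ^ 2)⁻¹ := by rw [mul_inv]

set_option maxHeartbeats 1000000 in

lemma integral_aux {w : ℂ} (hre : 0 < w.re) (him : 0 < w.im) :
    ∫ t : ℝ, ((t : ℂ) ^ 2 - w ^ 2)⁻¹ = Real.pi * Complex.I / w := by
  have him' : w.im ≠ 0 := him.ne'
  have hw0 : w ≠ 0 := fun h => him' (by simp [h])
  set F : ℝ → ℂ := fun t => (2 * w)⁻¹ *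
    (Complex.log ((t : ℂ) - w) - Complex.log ((t : ℂ) + w)) with hF
  have hsub : ∀ t : ℝ, (t : ℂ) - w ≠ 0 := by
    intro t h; apply him'; have := congrArg Complex.im h; simpa using this.symm
  have hadd : ∀ t : ℝ, (t : ℂ) + w ≠ 0 := by
    intro t h; apply him'; have := congrArg Complex.im h; simpa using this
  have hderiv : ∀ t : ℝ, HasDerivAt F (((t : ℂ) ^ 2 - w ^ 2)⁻¹) t := by
    intro t
    have hs1 : (t : ℂ) - w ∈ Complex.slitPlane := Or.inr (by simp [him'])
    have hs2 : (t : ℂ) + w ∈ Complex.slitPlane := Or.inr (by simp [him'])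
    have h1 : HasDerivAt (fun z : ℂ => Complex.log (z - w)) ((t : ℂ) - w)⁻¹ (t : ℂ) := by
      simpa [Function.comp_def] using (Complex.hasDerivAt_log hs1).comp (t : ℂ)
        ((hasDerivAt_id ((t : ℂ))).sub_const w)
    have h2 : HasDerivAt (fun z : ℂ => Complex.log (z + w)) ((t : ℂ) + w)⁻¹ (t : ℂ) := by
      simpa [Function.comp_def] using (Complex.hasDerivAt_log hs2).comp (t : ℂ)
        ((hasDerivAt_id ((t : ℂ))).add_const w)
    have h := ((h1.comp_ofReal).sub (h2.comp_ofReal)).const_mul ((2 * w)⁻¹)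
    refine h.congr_deriv ?_
    have e1 := hsub t; have e2 := hadd t
    have e4 : (t : ℂ) ^ 2 - w ^ 2 = ((t : ℂ) - w) * ((t : ℂ) + w) := by ring
    rw [e4, mul_inv]
    field_simp
    ring
  have htop : Tendsto F atTop (𝓝 0) := by
    have hinv : Tendsto (fun t : ℝ => w / (t : ℂ)) atTop (𝓝 0) := by
      have : Tendsto (fun t : ℝ => ((t : ℂ))⁻¹) atTop (𝓝 0) := by
        rw [show (fun t : ℝ => ((t : ℂ))⁻¹) = (Complex.ofReal ∘ fun r : ℝ => r⁻¹) from
          funext fun t => (Complex.ofReal_inv t).symm]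
        simpa using (Complex.continuous_ofReal.tendsto 0).comp tendsto_inv_atTop_zero
      simpa [div_eq_mul_inv] using tendsto_const_nhds.mul this
    have hlog : ContinuousAt Complex.log 1 :=
      continuousAt_clog (Or.inl (by simp))
    have hA : Tendsto (fun t : ℝ => Complex.log (1 - w / (t : ℂ))) atTop (𝓝 0) := by
      have := hlog.tendsto.comp (by simpa using tendsto_const_nhds.sub hinv :
        Tendsto (fun t : ℝ => 1 - w / (t : ℂ)) atTop (𝓝 1))
      simpa [Complex.log_one, Function.comp_def] using this
    have hB : Tendsto (fun t : ℝ => Complex.log (1 + w / (t : ℂ))) atTop (𝓝 0) := by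
      have := hlog.tendsto.comp (by simpa using tendsto_const_nhds.add hinv :
        Tendsto (fun t : ℝ => 1 + w / (t : ℂ)) atTop (𝓝 1))
      simpa [Complex.log_one, Function.comp_def] using this
    have hcomb : Tendsto (fun t : ℝ => (2 * w)⁻¹ *
        (Complex.log (1 - w / (t : ℂ)) - Complex.log (1 + w / (t : ℂ)))) atTop (𝓝 0) := by
      simpa using ((hA.sub hB).const_mul ((2 * w)⁻¹))
    apply hcomb.congr'
    filter_upwards [eventually_gt_atTop (0 : ℝ)] with t ht
    have ht0 : (t : ℂ) ≠ 0 := by exact_mod_cast ht.ne'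
    have e1 : 1 - w / (t : ℂ) = ((t : ℂ) - w) / (t : ℂ) := by field_simp
    have e2 : 1 + w / (t : ℂ) = ((t : ℂ) + w) / (t : ℂ) := by field_simp
    have n1 : 1 - w / (t : ℂ) ≠ 0 := by rw [e1]; exact div_ne_zero (hsub t) ht0
    have n2 : 1 + w / (t : ℂ) ≠ 0 := by rw [e2]; exact div_ne_zero (hadd t) ht0
    have m1 : (t : ℂ) - w = (t : ℂ) * (1 - w / (t : ℂ)) := by field_simp
    have m2 : (t : ℂ) + w = (t : ℂ) * (1 + w / (t : ℂ)) := by field_simp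
    rw [hF]
    simp only
    rw [m1, m2, Complex.log_ofReal_mul ht n1, Complex.log_ofReal_mul ht n2]
    ring
  have hbot : Tendsto F atBot (𝓝 (-(Real.pi * Complex.I / w))) := by
    have hinv : Tendsto (fun t : ℝ => w / ((-t : ℝ) : ℂ)) atBot (𝓝 0) := by
      have h0 : Tendsto (fun t : ℝ => (-t)⁻¹) atBot (𝓝 0) := by
        have h1 : Tendsto (fun t : ℝ => -t) atBot atTop := tendsto_neg_atBot_atTop
        have := tendsto_inv_atTop_zero.comp h1
        simpa [Function.comp_def] using this
      have : Tendsto (fun t : ℝ => (((-t : ℝ) : ℂ))⁻¹) atBot (𝓝 0) := by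
        rw [show (fun t : ℝ => (((-t : ℝ) : ℂ))⁻¹) = (Complex.ofReal ∘ fun t : ℝ => (-t)⁻¹)
          from funext fun t => by simp]
        simpa using (Complex.continuous_ofReal.tendsto 0).comp h0
      simpa [div_eq_mul_inv] using (tendsto_const_nhds (x := w)).mul this
    have hA : Tendsto (fun t : ℝ => Complex.log (-1 - w / ((-t : ℝ) : ℂ))) atBot
        (𝓝 (-(Real.pi * Complex.I))) := by
      have hz := Complex.tendsto_log_nhdsWithin_im_neg_of_re_neg_of_im_zero
        (z := (-1 : ℂ)) (by norm_num) (by norm_num)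
      have hmem : Tendsto (fun t : ℝ => -1 - w / ((-t : ℝ) : ℂ)) atBot
          (𝓝[{z : ℂ | z.im < 0}] (-1)) := by
        rw [tendsto_nhdsWithin_iff]
        constructor
        · simpa using tendsto_const_nhds.sub hinv
        · filter_upwards [eventually_lt_atBot (0 : ℝ)] with t ht
          have hnt : (0 : ℝ) < -t := by linarith
          have him3 : ((-1 : ℂ) - w / ((-t : ℝ) : ℂ)).im = -(w.im / (-t)) := by
            rw [Complex.sub_im, Complex.div_ofReal_im]
            simp
          have hpos : 0 < w.im / (-t) := div_pos him hnt
          simp only [Set.mem_setOf_eq, him3]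
          linarith
      have := hz.comp hmem
      simpa [Function.comp_def] using this
    have hB : Tendsto (fun t : ℝ => Complex.log (-1 + w / ((-t : ℝ) : ℂ))) atBot
        (𝓝 (Real.pi * Complex.I)) := by
      have hz := Complex.tendsto_log_nhdsWithin_im_nonneg_of_re_neg_of_im_zero
        (z := (-1 : ℂ)) (by norm_num) (by norm_num)
      have hmem : Tendsto (fun t : ℝ => -1 + w / ((-t : ℝ) : ℂ)) atBot
          (𝓝[{z : ℂ | 0 ≤ z.im}] (-1)) := by
        rw [tendsto_nhdsWithin_iff]
        constructor
        · simpa using tendsto_const_nhds.add hinv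
        · filter_upwards [eventually_lt_atBot (0 : ℝ)] with t ht
          have hnt : (0 : ℝ) < -t := by linarith
          have him3 : ((-1 : ℂ) + w / ((-t : ℝ) : ℂ)).im = w.im / (-t) := by
            rw [Complex.add_im, Complex.div_ofReal_im]
            simp
          have hpos : 0 < w.im / (-t) := div_pos him hnt
          simp only [Set.mem_setOf_eq, him3]
          linarith
      have := hz.comp hmem
      simpa [Function.comp_def] using this
    have hcomb : Tendsto (fun t : ℝ => (2 * w)⁻¹ *
        (Complex.log (-1 - w / ((-t : ℝ) : ℂ)) - Complex.log (-1 + w / ((-t : ℝ) : ℂ))))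
        atBot (𝓝 (-(Real.pi * Complex.I / w))) := by
      have := (hA.sub hB).const_mul ((2 * w)⁻¹)
      have hval : (2 * w)⁻¹ * (-(Real.pi * Complex.I) - Real.pi * Complex.I)
          = -(Real.pi * Complex.I / w) := by
        field_simp
        ring
      rw [hval] at this
      exact this
    apply hcomb.congr'
    filter_upwards [eventually_lt_atBot (0 : ℝ)] with t ht
    have hnt : (0 : ℝ) < -t := by linarith
    have ht0 : (((-t : ℝ)) : ℂ) ≠ 0 := by exact_mod_cast hnt.ne'
    have htne : (t : ℂ) ≠ 0 := by exact_mod_cast ht.ne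
    have e1 : (-1 : ℂ) - w / ((-t : ℝ) : ℂ) = ((t : ℂ) - w) / ((-t : ℝ) : ℂ) := by
      rw [eq_div_iff ht0]
      push_cast
      field_simp [htne]
      ring
    have e2 : (-1 : ℂ) + w / ((-t : ℝ) : ℂ) = ((t : ℂ) + w) / ((-t : ℝ) : ℂ) := by
      rw [eq_div_iff ht0]
      push_cast
      field_simp [htne]
      ring
    have n1 : (-1 : ℂ) - w / ((-t : ℝ) : ℂ) ≠ 0 := by rw [e1]; exact div_ne_zero (hsub t) ht0
    have n2 : (-1 : ℂ) + w / ((-t : ℝ) : ℂ) ≠ 0 := by rw [e2]; exact div_ne_zero (hadd t) ht0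
    have m1 : (t : ℂ) - w = ((-t : ℝ) : ℂ) * ((-1 : ℂ) - w / ((-t : ℝ) : ℂ)) := by
      rw [e1, mul_comm]
      exact (div_mul_cancel₀ _ ht0).symm
    have m2 : (t : ℂ) + w = ((-t : ℝ) : ℂ) * ((-1 : ℂ) + w / ((-t : ℝ) : ℂ)) := by
      rw [e2, mul_comm]
      exact (div_mul_cancel₀ _ ht0).symm
    rw [hF]
    simp only
    rw [m1, m2, Complex.log_ofReal_mul hnt n1, Complex.log_ofReal_mul hnt n2]
    ring
  have := MeasureTheory.integral_of_hasDerivAt_of_tendsto hderiv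
    (integrable_aux hre him) hbot htop
  rw [this]; ring


noncomputable def Wfun (b : ℝ) (ε : ℝ) : ℂ :=
  (Real.sqrt ((Real.sqrt (b ^ 4 + ε ^ 2) + b ^ 2) / 2) : ℂ) +
    (Real.sqrt ((Real.sqrt (b ^ 4 + ε ^ 2) - b ^ 2) / 2) : ℂ) * Complex.I

lemma Wfun_re (b ε : ℝ) : (Wfun b ε).re = Real.sqrt ((Real.sqrt (b ^ 4 + ε ^ 2) + b ^ 2) / 2) := by
  simp [Wfun]

lemma Wfun_im (b ε : ℝ) : (Wfun b ε).im = Real.sqrt ((Real.sqrt (b ^ 4 + ε ^ 2) - b ^ 2) / 2) := by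
  simp [Wfun]

lemma Wfun_props (b : ℝ) (hb : 0 < b) (ε : ℝ) (hε : 0 < ε) :
    0 < (Wfun b ε).re ∧ 0 < (Wfun b ε).im ∧
      (Wfun b ε) ^ 2 = (b : ℂ) ^ 2 + (ε : ℂ) * Complex.I := by
  set r : ℝ := Real.sqrt (b ^ 4 + ε ^ 2) with hr
  have hrnn : 0 ≤ b ^ 4 + ε ^ 2 := by positivity
  have hr2 : r ^ 2 = b ^ 4 + ε ^ 2 := Real.sq_sqrt hrnn
  have hr0 : 0 ≤ r := Real.sqrt_nonneg _
  have hrb : b ^ 2 < r := by nlinarith [sq_nonneg (r - b ^ 2), sq_nonneg (r + b ^ 2)]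
  set x : ℝ := Real.sqrt ((r + b ^ 2) / 2) with hxd
  set y : ℝ := Real.sqrt ((r - b ^ 2) / 2) with hyd
  have hx0 : 0 < x := Real.sqrt_pos.mpr (by nlinarith)
  have hy0 : 0 < y := Real.sqrt_pos.mpr (by nlinarith)
  have hx2 : x ^ 2 = (r + b ^ 2) / 2 := Real.sq_sqrt (by nlinarith)
  have hy2 : y ^ 2 = (r - b ^ 2) / 2 := Real.sq_sqrt (by nlinarith)
  have hxy : x * y = ε / 2 := by
    have h1 : x * y = Real.sqrt ((r + b ^ 2) / 2 * ((r - b ^ 2) / 2)) :=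
      (Real.sqrt_mul (by nlinarith) _).symm
    have h2 : (r + b ^ 2) / 2 * ((r - b ^ 2) / 2) = (ε / 2) ^ 2 := by nlinarith
    rw [h1, h2, Real.sqrt_sq (by positivity)]
  refine ⟨by rw [Wfun_re]; exact hx0, by rw [Wfun_im]; exact hy0, ?_⟩
  have : Wfun b ε = (x : ℂ) + (y : ℂ) * Complex.I := rfl
  rw [this]
  have expand : ((x : ℂ) + (y : ℂ) * Complex.I) ^ 2 =
      ((x ^ 2 - y ^ 2 : ℝ) : ℂ) + ((2 * (x * y) : ℝ) : ℂ) * Complex.I := by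
    push_cast
    ring_nf
    rw [Complex.I_sq]
    ring
  rw [expand]
  have e1 : x ^ 2 - y ^ 2 = b ^ 2 := by rw [hx2, hy2]; ring
  have e2 : 2 * (x * y) = ε := by rw [hxy]; ring
  rw [e1, e2]
  push_cast
  ring

/-- **Limiting absorption evaluation of `∫_ℝ (t² − b² − iε)^{−1} dt`.** For `b > 0`, the
function `t ↦ (t² − b² − iε)^{−1}` is integrable on `ℝ` for every `ε > 0`, and the value
of the integral converges to `iπ/b` as `ε → 0⁺`. -/
theorem integral_inv_limiting_absorption
    (b : ℝ) (hb : 0 < b) :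
    (∀ ε : ℝ, 0 < ε →
        Integrable (fun t : ℝ => ((t : ℂ) ^ 2 - (b : ℂ) ^ 2 - Complex.I * (ε : ℂ))⁻¹)) ∧
      Tendsto (fun ε : ℝ => ∫ t : ℝ, ((t : ℂ) ^ 2 - (b : ℂ) ^ 2 - Complex.I * (ε : ℂ))⁻¹)
        (nhdsWithin 0 (Set.Ioi 0)) (nhds (Complex.I * (Real.pi : ℂ) / (b : ℂ))) := by
  have hfun : ∀ ε : ℝ, 0 < ε → (fun t : ℝ => ((t : ℂ) ^ 2 - (b : ℂ) ^ 2 - Complex.I * (ε : ℂ))⁻¹)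
      = fun t : ℝ => ((t : ℂ) ^ 2 - (Wfun b ε) ^ 2)⁻¹ := by
    intro ε hε
    funext t
    rw [(Wfun_props b hb ε hε).2.2]
    ring_nf
  constructor
  · intro ε hε
    rw [hfun ε hε]
    exact integrable_aux (Wfun_props b hb ε hε).1 (Wfun_props b hb ε hε).2.1
  · have hWcont : Continuous (Wfun b) := by
      unfold Wfun
      fun_prop
    have hW0 : Wfun b 0 = (b : ℂ) := by
      unfold Wfun
      have h4 : Real.sqrt (b ^ 4 + 0 ^ 2) = b ^ 2 := by
        rw [show b ^ 4 + (0:ℝ) ^ 2 = (b ^ 2) ^ 2 by ring, Real.sqrt_sq (by positivity)]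
      rw [h4]
      have : (b ^ 2 + b ^ 2) / 2 = b ^ 2 := by ring
      rw [this, Real.sqrt_sq hb.le]
      simp
    have hWb : Tendsto (Wfun b) (𝓝[>] (0:ℝ)) (𝓝 (b : ℂ)) := by
      have : Tendsto (Wfun b) (𝓝[>] (0:ℝ)) (𝓝 (Wfun b 0)) :=
        (hWcont.tendsto 0).mono_left nhdsWithin_le_nhds
      rwa [hW0] at this
    have hbne : ((b : ℂ)) ≠ 0 := by exact_mod_cast hb.ne'
    have hdiv : Tendsto (fun ε : ℝ => (Real.pi : ℂ) * Complex.I / Wfun b ε)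
        (𝓝[>] (0:ℝ)) (𝓝 (Complex.I * (Real.pi : ℂ) / (b : ℂ))) := by
      have : Tendsto (fun ε : ℝ => (Real.pi : ℂ) * Complex.I / Wfun b ε) (𝓝[>] (0:ℝ))
          (𝓝 ((Real.pi : ℂ) * Complex.I / (b : ℂ))) :=
        tendsto_const_nhds.div hWb hbne
      convert this using 2
      ring
    apply hdiv.congr'
    filter_upwards [self_mem_nhdsWithin] with ε hε
    have hε : (0:ℝ) < ε := hε
    rw [hfun ε hε, integral_aux (Wfun_props b hb ε hε).1 (Wfun_props b hb ε hε).2.1]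
end
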